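/- Let Γ=(G,σ) be a signed graph on n vertices with nonnegative potential κ≥0. For all real numbers 1<p≤q and every 1≤k≤n, one has 2^{−p}·λ_k^{(p)}(Γ) ≥ 2^{−q}·λ_k^{(q)}(Γ), and p·(λ_k^{(p)}(Γ)/𝒟)^{1/p} ≤ q·(λ_k^{(q)}(Γ)/𝒟)^{1/q}, where 𝒟 = max_{1≤i≤n} (2κ_i + Σ_{j∼i} w_{ij})/(2μ_i). -/

import Mathlib

open Filter Topology Polynomial
open scoped Classical

noncomputable section

variable {V : Type} [Fintype V] [DecidableEq V]

/-- Sum of a (symmetric) summand over the unordered edges of `G`. -/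
def sgEdgeSum (G : SimpleGraph V) (F : V → V → ℝ) : ℝ :=
  (∑ i : V, ∑ j : V, if G.Adj i j then F i j else 0) / 2

/-- The Rayleigh quotient `R_p^σ` of the signed graph `p`-Laplacian with
edge weight `w`, signature `sgn`, vertex measure `μ` and potential `κ`. -/
def sgRayleigh (G : SimpleGraph V) (w sgn : V → V → ℝ) (μ κ : V → ℝ)
    (p : ℝ) (f : V → ℝ) : ℝ :=
  (sgEdgeSum G (fun i j => w i j * |f i - sgn i j * f j| ^ p) +
      ∑ i : V, κ i * |f i| ^ p) /
    ∑ i : V, μ i * |f i| ^ p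

/-- The unit sphere `S_p` of `ℓ^p(μ)`. -/
def pSphere (μ : V → ℝ) (p : ℝ) : Set (V → ℝ) :=
  {f | ∑ i : V, μ i * |f i| ^ p = 1}

/-- There is an odd continuous map from `B` into `ℝ^m ∖ {0}`. -/
def hasOddMapInto (B : Set (V → ℝ)) (m : ℕ) : Prop :=
  ∃ h : (V → ℝ) → (Fin m → ℝ),
    ContinuousOn h B ∧ (∀ x ∈ B, h x ≠ 0) ∧ (∀ x ∈ B, h (-x) = -(h x))

/-- The Krasnoselskii genus of `B` is at least `k`. -/
def genusGe (B : Set (V → ℝ)) (k : ℕ) : Prop :=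
  ∀ m, m < k → ¬ hasOddMapInto B m

/-- The family `F_k(S_p)` of closed symmetric subsets of the sphere `S_p`
with Krasnoselskii genus at least `k`. -/
def genusFamily (μ : V → ℝ) (p : ℝ) (k : ℕ) : Set (Set (V → ℝ)) :=
  {B | B ⊆ pSphere μ p ∧ IsClosed B ∧ (∀ x ∈ B, -x ∈ B) ∧ genusGe B k}

/-- The `k`-th variational eigenvalue `λ_k^{(p)}` of the signed graph `p`-Laplacian. -/
def varEig (G : SimpleGraph V) (w sgn : V → V → ℝ) (μ κ : V → ℝ)
    (p : ℝ) (k : ℕ) : ℝ :=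
  sInf ((fun B => sSup (sgRayleigh G w sgn μ κ p '' B)) '' genusFamily μ p k)

/-- The `k`-th smallest real root (1-indexed, counted with multiplicity) of the
characteristic polynomial of `A`; for a matrix with real spectrum this is the
`k`-th eigenvalue `λ_k(A)` in the ordering `λ_1 ≤ … ≤ λ_n`. -/
def eigval {m : Type} [Fintype m] [DecidableEq m] (A : Matrix m m ℝ) (k : ℕ) : ℝ :=
  (Multiset.sort A.charpoly.roots (· ≤ ·)).getD (k - 1) 0

/-- The normalized adjacency matrix `A^μ_{-Γ}` of the negation of the signed graph
`(H, sgn)` with edge weight `w` and vertex measure `μ`. -/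
def negAdj (H : SimpleGraph V) (w sgn : V → V → ℝ) (μ : V → ℝ) : Matrix V V ℝ :=
  fun i j => if H.Adj i j then -(sgn i j) * w i j / μ i else 0

/-- The normalized adjacency matrix `A^μ_{-Γ₀}` of the negation of the subgraph of
`(H, sgn)` with vertex set `s`, with restricted edge weight and vertex measure. -/
def negAdjSub (H : SimpleGraph V) (s : Finset V) (w sgn : V → V → ℝ) (μ : V → ℝ) :
    Matrix {x // x ∈ s} {x // x ∈ s} ℝ :=
  fun i j => if H.Adj ↑i ↑j then -(sgn ↑i ↑j) * w ↑i ↑j / μ ↑i else 0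

/-- The subgraph of `G` induced on the vertex set `s`. -/
def inducedGraph (G : SimpleGraph V) (s : Finset V) : SimpleGraph {x // x ∈ s} where
  Adj i j := G.Adj ↑i ↑j
  symm := ⟨fun _ _ h => G.adj_symm h⟩
  loopless := ⟨fun i h => G.irrefl (v := ↑i) h⟩

/-- `G` has an edge cover of cardinality `m`. -/
def edgeCoverCard {α : Type} (G : SimpleGraph α) (m : ℕ) : Prop :=
  ∃ C : Finset (Sym2 α), (C : Set (Sym2 α)) ⊆ G.edgeSet ∧
    (∀ v : α, ∃ e ∈ C, v ∈ e) ∧ C.card = m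



open Real

namespace SGAux

/-- Bernoulli-type inequality via weighted AM-GM. -/
lemma bernoulli_neg {θ x : ℝ} (hθ0 : 0 ≤ θ) (hθ1 : θ ≤ 1) (hx : 0 < x) :
    1 + θ ≤ x ^ (-θ) + θ * x := by
  have h1θ : (0:ℝ) < 1 + θ := by linarith
  have hw : θ / (1 + θ) + 1 / (1 + θ) = 1 := by field_simp; ring
  have h := Real.geom_mean_le_arith_mean2_weighted
    (div_nonneg hθ0 h1θ.le) (div_nonneg zero_le_one h1θ.le) hx.le
    (Real.rpow_nonneg hx.le (-θ)) hw
  have key : x ^ (θ / (1 + θ)) * (x ^ (-θ)) ^ (1 / (1 + θ)) = 1 := by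
    rw [← Real.rpow_mul hx.le, ← Real.rpow_add hx]
    rw [show θ / (1 + θ) + -θ * (1 / (1 + θ)) = 0 by field_simp; ring, Real.rpow_zero]
  rw [key] at h
  have := mul_le_mul_of_nonneg_left h h1θ.le
  rw [mul_one] at this
  calc 1 + θ = (1 + θ) * 1 := by ring
  _ ≤ (1+θ) * (θ / (1 + θ) * x + 1 / (1 + θ) * x ^ (-θ)) := by
        exact mul_le_mul_of_nonneg_left h h1θ.le
  _ = x ^ (-θ) + θ * x := by field_simp; ring

/-- `2 ^ (1 - γ) * γ ≤ 1` for `γ ∈ (0,1]`; equivalently `2^(1-1/β) ≤ β`. -/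
lemma two_rpow_le {γ : ℝ} (hγ0 : 0 < γ) (hγ1 : γ ≤ 1) : γ * 2 ^ (1 - γ) ≤ 1 := by
  have h := bernoulli_neg (θ := 1 - γ) (by linarith) (by linarith) (by norm_num : (0:ℝ) < 2)
  -- 1 + (1-γ) ≤ 2^(γ-1) + (1-γ)*2  ⟹ γ ≤ 2^(γ-1)
  have h2 : γ ≤ (2:ℝ) ^ (γ - 1) := by
    have : -(1 - γ) = γ - 1 := by ring
    rw [this] at h; linarith
  have hpos : (0:ℝ) < 2 ^ (1 - γ) := Real.rpow_pos_of_pos (by norm_num) _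
  have := mul_le_mul_of_nonneg_right h2 hpos.le
  rwa [← Real.rpow_add (by norm_num : (0:ℝ) < 2), show γ - 1 + (1 - γ) = 0 by ring,
    Real.rpow_zero] at this

/-- Tangent line inequality for the convex function `s ↦ s^c`, `c ∈ [-1,0]`. -/
lemma rpow_tangent {c s m : ℝ} (hc0 : -1 ≤ c) (hc1 : c ≤ 0) (hs : 0 < s) (hm : 0 < m) :
    m ^ c + c * m ^ (c - 1) * (s - m) ≤ s ^ c := by
  have hb := bernoulli_neg (θ := -c) (by linarith) (by linarith) (div_pos hs hm)
  rw [neg_neg] at hb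
  -- 1 + (-c) ≤ (s/m)^c + (-c) * (s/m)
  have hmc : (0:ℝ) < m ^ c := Real.rpow_pos_of_pos hm _
  have hdiv : (s / m) ^ c = s ^ c / m ^ c := Real.div_rpow hs.le hm.le c
  have hms : m ^ (c - 1) = m ^ c / m := by
    rw [Real.rpow_sub hm, Real.rpow_one]
  have hh := mul_le_mul_of_nonneg_left hb hmc.le
  have hmne : m ≠ 0 := hm.ne'
  have e1 : m ^ c * ((s / m) ^ c + -c * (s / m)) = s ^ c + -(c * (m ^ c / m) * s) := by
    rw [hdiv]; field_simp
  rw [e1] at hh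
  -- hh : m ^ c * (1 + -c) ≤ s ^ c + -(c * (m^c/m) * s)
  rw [hms]
  have e2 : c * (m ^ c / m) * m = c * m ^ c := by
    field_simp
  nlinarith [hh, e2]


/-- Core (Hermite–Hadamard style) inequality:
for `γ ∈ (0,1]` and `0 < v ≤ u`, `γ (u-v) ((u+v)/2)^(γ-1) ≤ u^γ - v^γ`. -/
lemma core_rpow {γ u v : ℝ} (hγ0 : 0 < γ) (hγ1 : γ ≤ 1) (hv : 0 < v) (huv : v ≤ u) :
    γ * (u - v) * ((u + v) / 2) ^ (γ - 1) ≤ u ^ γ - v ^ γ := by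
  set c : ℝ := γ - 1 with hc
  set m : ℝ := (u + v) / 2 with hm
  have hu : 0 < u := lt_of_lt_of_le hv huv
  have hmpos : 0 < m := by rw [hm]; linarith
  have hc0 : -1 ≤ c := by rw [hc]; linarith
  have hc1 : c ≤ 0 := by rw [hc]; linarith
  have h0mem : (0:ℝ) ∉ Set.uIcc v u := by
    rw [Set.uIcc_of_le huv]
    intro h
    exact absurd h.1 (not_le.mpr hv)
  -- integral of s^c over [v,u]
  have hint : ∫ s in v..u, s ^ c = (u ^ γ - v ^ γ) / γ := by
    rw [integral_rpow (Or.inl (by linarith : (-1:ℝ) < c))]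
    rw [show c + 1 = γ by rw [hc]; ring]
  -- integral of the tangent line
  have hlin : ∫ s in v..u, (m ^ c + c * m ^ (c - 1) * (s - m))
      = (u - v) * m ^ c := by
    have h1 : ∀ s : ℝ, m ^ c + c * m ^ (c - 1) * (s - m)
        = (m ^ c - c * m ^ (c - 1) * m) + (c * m ^ (c - 1)) * s := by
      intro s; ring
    simp only [h1]
    rw [intervalIntegral.integral_add (f := fun _ => m ^ c - c * m ^ (c - 1) * m)
      (g := fun s => c * m ^ (c - 1) * s) (intervalIntegrable_const)
      ((continuous_const.mul continuous_id').intervalIntegrable v u),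
      intervalIntegral.integral_const, intervalIntegral.integral_const_mul, integral_id,
      smul_eq_mul]
    have h2 : (u ^ 2 - v ^ 2) / 2 = m * (u - v) := by rw [hm]; ring
    rw [h2]
    ring
  have hmono : ∫ s in v..u, (m ^ c + c * m ^ (c - 1) * (s - m)) ≤ ∫ s in v..u, s ^ c := by
    apply intervalIntegral.integral_mono_on huv
    · exact (continuous_const.add ((continuous_const.mul (continuous_id.sub continuous_const)))).intervalIntegrable v u
    · exact intervalIntegral.intervalIntegrable_rpow (Or.inr h0mem)
    · intro s hs
      exact rpow_tangent hc0 hc1 (lt_of_lt_of_le hv hs.1) hmpos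
  rw [hint, hlin] at hmono
  have := mul_le_mul_of_nonneg_left hmono hγ0.le
  rw [mul_div_cancel₀ _ hγ0.ne'] at this
  linarith [this]

/-- Two-sequence finite Hölder inequality in geometric-mean form. -/
lemma holder_finset {ι : Type*} (s : Finset ι) (u v : ι → ℝ) (hu : ∀ i ∈ s, 0 ≤ u i)
    (hv : ∀ i ∈ s, 0 ≤ v i) {θ : ℝ} (hθ0 : 0 < θ) (hθ1 : θ < 1) :
    ∑ i ∈ s, u i ^ θ * v i ^ (1 - θ) ≤ (∑ i ∈ s, u i) ^ θ * (∑ i ∈ s, v i) ^ (1 - θ) := by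
  have h1θ : (0:ℝ) < 1 - θ := by linarith
  set U := ∑ i ∈ s, u i with hU
  set V := ∑ i ∈ s, v i with hV
  have hU0 : 0 ≤ U := Finset.sum_nonneg hu
  have hV0 : 0 ≤ V := Finset.sum_nonneg hv
  rcases hU0.eq_or_lt with hU1 | hUpos
  · have hz : ∀ i ∈ s, u i = 0 := by
      intro i hi
      exact ((Finset.sum_eq_zero_iff_of_nonneg hu).1 hU1.symm) i hi
    have hL : ∑ i ∈ s, u i ^ θ * v i ^ (1 - θ) = 0 :=
      Finset.sum_eq_zero fun i hi => by rw [hz i hi, Real.zero_rpow hθ0.ne', zero_mul]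
    rw [hL, ← hU1, Real.zero_rpow hθ0.ne', zero_mul]
  rcases hV0.eq_or_lt with hV1 | hVpos
  · have hz : ∀ i ∈ s, v i = 0 := by
      intro i hi
      exact ((Finset.sum_eq_zero_iff_of_nonneg hv).1 hV1.symm) i hi
    have hL : ∑ i ∈ s, u i ^ θ * v i ^ (1 - θ) = 0 :=
      Finset.sum_eq_zero fun i hi => by rw [hz i hi, Real.zero_rpow h1θ.ne', mul_zero]
    rw [hL, ← hV1, Real.zero_rpow h1θ.ne', mul_zero]
  have hC0 : 0 ≤ U ^ θ * V ^ (1 - θ) :=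
    mul_nonneg (Real.rpow_nonneg hU0 _) (Real.rpow_nonneg hV0 _)
  have key : ∀ i ∈ s, u i ^ θ * v i ^ (1 - θ)
      ≤ (θ / U * u i + (1 - θ) / V * v i) * (U ^ θ * V ^ (1 - θ)) := by
    intro i hi
    have hgm := Real.geom_mean_le_arith_mean2_weighted hθ0.le h1θ.le
      (div_nonneg (hu i hi) hU0) (div_nonneg (hv i hi) hV0) (by ring)
    have := mul_le_mul_of_nonneg_right hgm hC0
    have hUne : U ^ θ ≠ 0 := (Real.rpow_pos_of_pos hUpos θ).ne'
    have hVne : V ^ (1 - θ) ≠ 0 := (Real.rpow_pos_of_pos hVpos (1 - θ)).ne'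
    calc u i ^ θ * v i ^ (1 - θ)
        = (u i / U) ^ θ * (v i / V) ^ (1 - θ) * (U ^ θ * V ^ (1 - θ)) := by
          rw [Real.div_rpow (hu i hi) hU0, Real.div_rpow (hv i hi) hV0]
          field_simp
      _ ≤ (θ * (u i / U) + (1 - θ) * (v i / V)) * (U ^ θ * V ^ (1 - θ)) := this
      _ = (θ / U * u i + (1 - θ) / V * v i) * (U ^ θ * V ^ (1 - θ)) := by ring
  calc ∑ i ∈ s, u i ^ θ * v i ^ (1 - θ)
      ≤ ∑ i ∈ s, (θ / U * u i + (1 - θ) / V * v i) * (U ^ θ * V ^ (1 - θ)) :=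
        Finset.sum_le_sum key
    _ = (θ / U * U + (1 - θ) / V * V) * (U ^ θ * V ^ (1 - θ)) := by
        rw [← Finset.sum_mul]
        congr 1
        rw [Finset.sum_add_distrib, ← Finset.mul_sum, ← Finset.mul_sum]
    _ = U ^ θ * V ^ (1 - θ) := by
        rw [div_mul_cancel₀ _ hUpos.ne', div_mul_cancel₀ _ hVpos.ne']
        ring

/-- Two-point Hölder. -/
lemma holder_two {x1 y1 x2 y2 θ : ℝ} (hx1 : 0 ≤ x1) (hy1 : 0 ≤ y1) (hx2 : 0 ≤ x2)
    (hy2 : 0 ≤ y2) (hθ0 : 0 < θ) (hθ1 : θ < 1) :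
    x1 ^ θ * y1 ^ (1 - θ) + x2 ^ θ * y2 ^ (1 - θ) ≤ (x1 + x2) ^ θ * (y1 + y2) ^ (1 - θ) := by
  have h := holder_finset (Finset.univ : Finset Bool)
    (fun b => if b then x1 else x2) (fun b => if b then y1 else y2)
    (by intro i _; split <;> assumption)
    (by intro i _; split <;> assumption) hθ0 hθ1
  simpa [Fintype.sum_bool] using h

/-- Subadditivity of `x ↦ x^θ` for `θ ∈ (0,1]`. -/
lemma rpow_add_le {x y θ : ℝ} (hx : 0 ≤ x) (hy : 0 ≤ y) (hθ0 : 0 < θ) (hθ1 : θ ≤ 1) :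
    (x + y) ^ θ ≤ x ^ θ + y ^ θ := by
  rcases hx.eq_or_lt with hx0 | hxpos
  · rw [← hx0, zero_add, Real.zero_rpow hθ0.ne', zero_add]
  rcases hy.eq_or_lt with hy0 | hypos
  · rw [← hy0, add_zero, Real.zero_rpow hθ0.ne', add_zero]
  have hxy : 0 < x + y := by linarith
  have e : (x + y) ^ θ = x * (x + y) ^ (θ - 1) + y * (x + y) ^ (θ - 1) := by
    rw [← add_mul]
    nth_rewrite 1 [show θ = 1 + (θ-1) by ring]
    rw [Real.rpow_add hxy, Real.rpow_one]
  rw [e]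
  have b1 : x * (x + y) ^ (θ - 1) ≤ x ^ θ := by
    nth_rewrite 2 [show θ = 1 + (θ-1) by ring]
    rw [Real.rpow_add hxpos, Real.rpow_one]
    exact mul_le_mul_of_nonneg_left
      (Real.rpow_le_rpow_of_nonpos hxpos (by linarith) (by linarith)) hx
  have b2 : y * (x + y) ^ (θ - 1) ≤ y ^ θ := by
    nth_rewrite 2 [show θ = 1 + (θ-1) by ring]
    rw [Real.rpow_add hypos, Real.rpow_one]
    exact mul_le_mul_of_nonneg_left
      (Real.rpow_le_rpow_of_nonpos hypos (by linarith) (by linarith)) hy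
  linarith

/-- Superadditivity of `x ↦ x^r` for `r ≥ 1`. -/
lemma add_rpow_le {x y r : ℝ} (hx : 0 ≤ x) (hy : 0 ≤ y) (hr : 1 ≤ r) :
    x ^ r + y ^ r ≤ (x + y) ^ r := by
  have hr0 : (0:ℝ) < r := by linarith
  rcases hx.eq_or_lt with hx0 | hxpos
  · rw [← hx0, zero_add, Real.zero_rpow hr0.ne', zero_add]
  rcases hy.eq_or_lt with hy0 | hypos
  · rw [← hy0, add_zero, Real.zero_rpow hr0.ne', add_zero]
  have hxy : 0 < x + y := by linarith
  have e : (x + y) ^ r = x * (x + y) ^ (r - 1) + y * (x + y) ^ (r - 1) := by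
    rw [← add_mul]
    nth_rewrite 1 [show r = 1 + (r-1) by ring]
    rw [Real.rpow_add hxy, Real.rpow_one]
  rw [e]
  have b1 : x ^ r ≤ x * (x + y) ^ (r - 1) := by
    nth_rewrite 1 [show r = 1 + (r-1) by ring]
    rw [Real.rpow_add hxpos, Real.rpow_one]
    exact mul_le_mul_of_nonneg_left
      (Real.rpow_le_rpow hx (by linarith) (by linarith)) hx
  have b2 : y ^ r ≤ y * (x + y) ^ (r - 1) := by
    nth_rewrite 1 [show r = 1 + (r-1) by ring]
    rw [Real.rpow_add hypos, Real.rpow_one]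
    exact mul_le_mul_of_nonneg_left
      (Real.rpow_le_rpow hy (by linarith) (by linarith)) hy
  linarith

/-- `x^θ + y^θ ≤ 2^(1-θ) (x+y)^θ` for `θ ∈ (0,1]`. -/
lemma two_term_concave {x y θ : ℝ} (hx : 0 ≤ x) (hy : 0 ≤ y) (hθ0 : 0 < θ) (hθ1 : θ ≤ 1) :
    x ^ θ + y ^ θ ≤ 2 ^ (1 - θ) * (x + y) ^ θ := by
  rcases eq_or_lt_of_le hθ1 with h1 | h1
  · rw [h1]; simp
  have h := holder_two hx zero_le_one hy zero_le_one hθ0 h1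
  rw [Real.one_rpow, mul_one, mul_one] at h
  calc x ^ θ + y ^ θ ≤ (x + y) ^ θ * (1 + 1 : ℝ) ^ (1 - θ) := h
    _ = 2 ^ (1-θ) * (x + y) ^ θ := by norm_num; ring

/-- `(x+y)^r ≤ 2^(r-1) (x^r + y^r)` for `r ≥ 1`. -/
lemma rpow_convex2 {x y r : ℝ} (hx : 0 ≤ x) (hy : 0 ≤ y) (hr : 1 ≤ r) :
    (x + y) ^ r ≤ 2 ^ (r - 1) * (x ^ r + y ^ r) := by
  have hr0 : (0:ℝ) < r := by linarith
  have h := two_term_concave (Real.rpow_nonneg hx r) (Real.rpow_nonneg hy r)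
    (by positivity : (0:ℝ) < 1/r) (by rw [div_le_one hr0]; linarith)
  rw [← Real.rpow_mul hx, ← Real.rpow_mul hy, mul_one_div, div_self hr0.ne',
    Real.rpow_one, Real.rpow_one] at h
  -- h : x + y ≤ 2 ^ (1 - 1/r) * (x^r + y^r) ^ (1/r)
  have h2 := Real.rpow_le_rpow (by linarith) h hr0.le
  have hS : 0 ≤ x ^ r + y ^ r := by positivity
  rw [Real.mul_rpow (by positivity) (Real.rpow_nonneg hS _), ← Real.rpow_mul (by norm_num),
    ← Real.rpow_mul hS, sub_mul, one_mul, one_div, inv_mul_cancel₀ hr0.ne',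
    Real.rpow_one] at h2
  exact h2

/-- Power mean monotonicity (two points, equal weights). -/
lemma pm_mono {x y β q : ℝ} (hx : 0 ≤ x) (hy : 0 ≤ y) (hβ0 : 0 < β) (hβq : β ≤ q) :
    (x ^ β + y ^ β) / 2 ≤ ((x ^ q + y ^ q) / 2) ^ (β/q) := by
  have hq0 : (0:ℝ) < q := lt_of_lt_of_le hβ0 hβq
  have hr1 : (1:ℝ) ≤ q / β := (one_le_div hβ0).mpr hβq
  have hxb : 0 ≤ x ^ β := Real.rpow_nonneg hx _
  have hyb : 0 ≤ y ^ β := Real.rpow_nonneg hy _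
  have h := rpow_convex2 hxb hyb hr1
  rw [← Real.rpow_mul hx, ← Real.rpow_mul hy, mul_div_cancel₀ _ hβ0.ne'] at h
  -- h : (x^β + y^β)^(q/β) ≤ 2^(q/β - 1) * (x^q + y^q)
  have key : ((x ^ β + y ^ β)/2) ^ (q/β) ≤ (x ^ q + y ^ q) / 2 := by
    rw [Real.div_rpow (by positivity) (by norm_num)]
    rw [div_le_div_iff₀ (by positivity) (by norm_num)]
    calc (x ^ β + y ^ β) ^ (q / β) * 2 ≤ 2 ^ (q/β - 1) * (x ^ q + y ^ q) * 2 := by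
          exact mul_le_mul_of_nonneg_right h (by norm_num)
      _ = (x ^ q + y ^ q) * (2 ^ (q/β -1) * 2 ^ (1:ℝ)) := by
          rw [Real.rpow_one]; ring
      _ = (x ^ q + y ^ q) * 2 ^ (q / β) := by
          rw [← Real.rpow_add (by norm_num : (0:ℝ) < 2)]; ring_nf
  have := Real.rpow_le_rpow (by positivity) key (by positivity : (0:ℝ) ≤ β/q)
  rw [← Real.rpow_mul (by positivity), div_mul_div_comm, mul_comm q β,
    div_self (by positivity : β * q ≠ 0), Real.rpow_one] at this
  exact this

/-! ### The odd power map -/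

/-- The odd power function `t ↦ sign(t)|t|^α`. -/
noncomputable def pw (α t : ℝ) : ℝ := (max t 0) ^ α - (max (-t) 0) ^ α

lemma pw_of_nonneg {α : ℝ} (hα : α ≠ 0) {t : ℝ} (ht : 0 ≤ t) : pw α t = t ^ α := by
  unfold pw
  rw [max_eq_left ht, max_eq_right (neg_nonpos.mpr ht), Real.zero_rpow hα, sub_zero]

lemma pw_neg (α t : ℝ) : pw α (-t) = - pw α t := by
  unfold pw; rw [neg_neg]; ring

lemma pw_of_nonpos {α : ℝ} (hα : α ≠ 0) {t : ℝ} (ht : t ≤ 0) : pw α t = -((-t) ^ α) := by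
  have : pw α (-(-t)) = - pw α (-t) := pw_neg α (-t)
  rw [neg_neg] at this
  rw [this, pw_of_nonneg hα (by linarith : 0 ≤ -t)]

lemma abs_pw {α : ℝ} (hα : α ≠ 0) (t : ℝ) : |pw α t| = |t| ^ α := by
  rcases le_total 0 t with ht | ht
  · rw [pw_of_nonneg hα ht, abs_of_nonneg (Real.rpow_nonneg ht α), abs_of_nonneg ht]
  · rw [pw_of_nonpos hα ht, abs_neg, abs_of_nonneg (Real.rpow_nonneg (by linarith) α),
      abs_of_nonpos ht]

lemma pw_one (t : ℝ) : pw 1 t = t := by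
  unfold pw
  rw [Real.rpow_one, Real.rpow_one]
  rcases le_total 0 t with ht | ht
  · rw [max_eq_left ht, max_eq_right (neg_nonpos.mpr ht), sub_zero]
  · rw [max_eq_right ht, max_eq_left (neg_nonneg.mpr ht)]; ring

lemma pw_pw {α β : ℝ} (hα : 0 < α) (hβ : 0 < β) (t : ℝ) :
    pw α (pw β t) = pw (α * β) t := by
  rcases le_total 0 t with ht | ht
  · rw [pw_of_nonneg hβ.ne' ht, pw_of_nonneg hα.ne' (Real.rpow_nonneg ht β),
      pw_of_nonneg (by positivity : α * β ≠ 0) ht, ← Real.rpow_mul ht, mul_comm β α]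
  · rw [pw_of_nonpos hβ.ne' ht]
    rw [pw_neg, pw_of_nonneg hα.ne' (Real.rpow_nonneg (by linarith : 0 ≤ -t) β),
      pw_of_nonpos (by positivity : α * β ≠ 0) ht, ← Real.rpow_mul (by linarith : 0 ≤ -t),
      mul_comm β α]

lemma pw_sign {σ : ℝ} (hσ : σ = 1 ∨ σ = -1) (α t : ℝ) : pw α (σ * t) = σ * pw α t := by
  rcases hσ with h | h <;> subst h
  · rw [one_mul, one_mul]
  · rw [show (-1 : ℝ) * t = -t by ring, pw_neg]; ring

lemma continuous_pw {α : ℝ} (hα : 0 < α) : Continuous (pw α) := by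
  have h1 : Continuous fun t : ℝ => (max t 0) ^ α := by
    rw [continuous_iff_continuousAt]
    intro x
    exact (Real.continuousAt_rpow_const _ _ (Or.inr hα.le)).comp
      ((continuous_id.max continuous_const).continuousAt)
  have h2 : Continuous fun t : ℝ => (max (-t) 0) ^ α := by
    rw [continuous_iff_continuousAt]
    intro x
    exact (Real.continuousAt_rpow_const _ _ (Or.inr hα.le)).comp
      ((continuous_neg.max continuous_const).continuousAt)
  exact h1.sub h2

/-! ### Key inequality A -/

lemma pw_lipA_aux {α a b : ℝ} (hα0 : 0 < α) (hα1 : α ≤ 1) (ha : 0 ≤ a) (hba : b ≤ a) :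
    |pw α a - pw α b| ≤ 2 ^ (1 - α) * |a - b| ^ α := by
  have h2α : (1:ℝ) ≤ 2 ^ (1 - α) := Real.one_le_rpow one_le_two (by linarith)
  rcases le_or_gt 0 b with hb | hb
  · rw [pw_of_nonneg hα0.ne' ha, pw_of_nonneg hα0.ne' hb]
    have hle : b ^ α ≤ a ^ α := Real.rpow_le_rpow hb hba hα0.le
    rw [abs_of_nonneg (by linarith), abs_of_nonneg (by linarith : (0:ℝ) ≤ a - b)]
    have hsub : a ^ α ≤ (a - b) ^ α + b ^ α := by
      have h := rpow_add_le (x := a - b) (y := b) (by linarith) hb hα0 hα1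
      rwa [sub_add_cancel] at h
    have h0 : (0:ℝ) ≤ (a - b) ^ α := Real.rpow_nonneg (by linarith) α
    nlinarith
  · rw [pw_of_nonneg hα0.ne' ha, pw_of_nonpos hα0.ne' hb.le, sub_neg_eq_add]
    have h0a : (0:ℝ) ≤ a ^ α := Real.rpow_nonneg ha α
    have h0b : (0:ℝ) ≤ (-b) ^ α := Real.rpow_nonneg (by linarith) α
    rw [abs_of_nonneg (by linarith), abs_of_nonneg (by linarith : (0:ℝ) ≤ a - b)]
    have h := two_term_concave ha (by linarith : (0:ℝ) ≤ -b) hα0 hα1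
    rwa [show a + -b = a - b by ring] at h

lemma pw_lipA_half {α a b : ℝ} (hα0 : 0 < α) (hα1 : α ≤ 1) (hba : b ≤ a) :
    |pw α a - pw α b| ≤ 2 ^ (1 - α) * |a - b| ^ α := by
  rcases le_or_gt 0 a with ha | ha
  · exact pw_lipA_aux hα0 hα1 ha hba
  · have h := pw_lipA_aux hα0 hα1 (a := -b) (b := -a) (by linarith) (by linarith)
    rw [pw_neg, pw_neg, show -pw α b - -pw α a = -(pw α b - pw α a) by ring, abs_neg,
      abs_sub_comm (pw α b), show -b - -a = -(b - a) by ring, abs_neg, abs_sub_comm b] at h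
    exact h

lemma pw_lipA {α a b : ℝ} (hα0 : 0 < α) (hα1 : α ≤ 1) :
    |pw α a - pw α b| ≤ 2 ^ (1 - α) * |a - b| ^ α := by
  rcases le_total b a with hba | hab
  · exact pw_lipA_half hα0 hα1 hba
  · have h := pw_lipA_half hα0 hα1 hab
    rwa [abs_sub_comm (pw α b), abs_sub_comm b] at h

/-! ### Key inequality B -/

lemma two_rpow_beta {β q : ℝ} (hβ : 1 ≤ β) (hq : β ≤ q) :
    (2:ℝ) ^ ((β - 1)/q) ≤ β := by
  have hβ0 : (0:ℝ) < β := by linarith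
  have hq0 : (0:ℝ) < q := by linarith
  have h1 : (β - 1)/q ≤ 1 - 1/β := by
    have ha : (β - 1)/q ≤ (β - 1)/β :=
      div_le_div_of_nonneg_left (by linarith) hβ0 hq
    have hb : (β - 1)/β = 1 - 1/β := by
      rw [sub_div, div_self hβ0.ne', one_div]
    linarith [ha, hb ▸ ha]
  have h2 : (2:ℝ) ^ ((β-1)/q) ≤ 2 ^ (1 - 1/β) :=
    Real.rpow_le_rpow_of_exponent_le one_le_two h1
  have h3 := two_rpow_le (γ := 1/β) (by positivity) (by rw [div_le_one hβ0]; linarith)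
  -- (1/β) * 2^(1 - 1/β) ≤ 1
  have h4 : (2:ℝ) ^ (1 - 1/β) ≤ β := by
    have hpos : (0:ℝ) < 2 ^ (1 - 1/β) := Real.rpow_pos_of_pos (by norm_num) _
    rw [show (1:ℝ)/β * 2 ^ (1 - 1/β) ≤ 1 ↔ 2 ^ (1-1/β) * (1/β) ≤ 1 by rw [mul_comm]] at h3
    rw [← le_div_iff₀ (by positivity : (0:ℝ) < 1/β)] at h3
    simpa using h3
  linarith

lemma pw_lipB_aux {β q a b : ℝ} (hβ : 1 ≤ β) (hq : β ≤ q) (ha : 0 ≤ a) (hba : b ≤ a) :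
    |pw β a - pw β b| ≤ β * ((|a| ^ q + |b| ^ q) / 2) ^ ((β - 1)/q) * |a - b| := by
  have hβ0 : (0:ℝ) < β := by linarith
  have hq0 : (0:ℝ) < q := by linarith
  have hβ1 : (0:ℝ) ≤ β - 1 := by linarith
  rcases le_or_gt 0 b with hb | hb
  · -- same sign: 0 ≤ b ≤ a
    have hrle : b ^ β ≤ a ^ β := Real.rpow_le_rpow hb hba hβ0.le
    rw [pw_of_nonneg hβ0.ne' ha, pw_of_nonneg hβ0.ne' hb, abs_of_nonneg ha, abs_of_nonneg hb,
      abs_of_nonneg (by linarith : (0:ℝ) ≤ a ^ β - b ^ β),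
      abs_of_nonneg (by linarith : (0:ℝ) ≤ a - b)]
    set Q : ℝ := (a ^ q + b ^ q) / 2 with hQdef
    have hQ0 : 0 ≤ Q := by positivity
    rcases hb.eq_or_lt with hb0 | hbpos
    · -- b = 0
      rw [← hb0, Real.zero_rpow hβ0.ne', sub_zero, sub_zero]
      rcases ha.eq_or_lt with ha0 | hapos
      · rw [← ha0, Real.zero_rpow hβ0.ne', mul_zero]
      · have hQa : Q = a ^ q / 2 := by
          rw [hQdef, ← hb0, Real.zero_rpow hq0.ne', add_zero]
        have hkey : Q ^ ((β - 1)/q) = a ^ (β - 1) / 2 ^ ((β - 1)/q) := by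
          rw [hQa, Real.div_rpow (Real.rpow_nonneg ha q) (by norm_num),
            ← Real.rpow_mul ha]
          congr 2
          field_simp
        rw [hkey]
        have h2β := two_rpow_beta hβ hq
        have hpow2 : (0:ℝ) < 2 ^ ((β - 1)/q) := Real.rpow_pos_of_pos (by norm_num) _
        have haa : a ^ (β - 1) * a = a ^ β := by
          nth_rewrite 2 [← Real.rpow_one a]
          rw [← Real.rpow_add hapos]
          norm_num
        have : β * (a ^ (β - 1) / 2 ^ ((β - 1)/q)) * a = (β / 2 ^ ((β-1)/q)) * a ^ β := by
          rw [← haa]; ring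
        rw [this]
        have hfac : (1:ℝ) ≤ β / 2 ^ ((β-1)/q) := (one_le_div hpow2).mpr h2β
        nlinarith [Real.rpow_nonneg ha β]
    · -- 0 < b ≤ a
      have hγ0 : (0:ℝ) < 1/β := by positivity
      have hγ1 : 1/β ≤ 1 := by rw [div_le_one hβ0]; linarith
      set P : ℝ := (a ^ β + b ^ β) / 2 with hPdef
      have hPpos : 0 < P := by
        have h1 : 0 < b ^ β := Real.rpow_pos_of_pos hbpos β
        have h2 : 0 ≤ a ^ β := Real.rpow_nonneg ha β
        rw [hPdef]; linarith
      have core := core_rpow hγ0 hγ1 (Real.rpow_pos_of_pos hbpos β) hrle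
      rw [← Real.rpow_mul ha, ← Real.rpow_mul hb, mul_one_div, div_self hβ0.ne',
        Real.rpow_one, Real.rpow_one] at core
      -- core : 1/β * (a^β - b^β) * P ^ (1/β - 1) ≤ a - b
      have hPpow : P ^ ((1:ℝ)/β - 1) * P ^ (1 - 1/β) = 1 := by
        rw [← Real.rpow_add hPpos, show (1:ℝ)/β - 1 + (1 - 1/β) = 0 by ring, Real.rpow_zero]
      have h5 : a ^ β - b ^ β ≤ (a - b) * (β * P ^ (1 - 1/β)) := by
        have h6 := mul_le_mul_of_nonneg_right core
          (by positivity : (0:ℝ) ≤ β * P ^ (1 - 1/β))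
        calc a ^ β - b ^ β
            = 1/β * (a ^ β - b ^ β) * P ^ ((1:ℝ)/β - 1) * (β * P ^ (1 - 1/β)) := by
              rw [show 1/β * (a ^ β - b ^ β) * P ^ ((1:ℝ)/β - 1) * (β * P ^ (1 - 1/β))
                  = (a ^ β - b ^ β) * (1/β * β) * (P ^ ((1:ℝ)/β - 1) * P ^ (1 - 1/β)) by ring,
                hPpow, one_div, inv_mul_cancel₀ hβ0.ne', mul_one, mul_one]
          _ ≤ (a - b) * (β * P ^ (1 - 1/β)) := h6
      have hPQ : P ^ (1 - 1/β) ≤ Q ^ ((β - 1)/q) := by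
        have pm := pm_mono ha hb hβ0 hq
        have := Real.rpow_le_rpow hPpos.le pm (by rw [sub_nonneg, div_le_one hβ0]; linarith : (0:ℝ) ≤ 1 - 1/β)
        rwa [← Real.rpow_mul hQ0, show β/q * (1 - 1/β) = (β - 1)/q by field_simp] at this
      calc a ^ β - b ^ β ≤ (a - b) * (β * P ^ (1 - 1/β)) := h5
        _ ≤ (a - b) * (β * Q ^ ((β - 1)/q)) := by
            apply mul_le_mul_of_nonneg_left _ (by linarith : (0:ℝ) ≤ a - b)
            exact mul_le_mul_of_nonneg_left hPQ hβ0.le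
        _ = β * Q ^ ((β - 1)/q) * (a - b) := by ring
  · -- mixed signs: b < 0 ≤ a
    set c : ℝ := -b with hcdef
    have hc : 0 < c := by rw [hcdef]; linarith
    rw [pw_of_nonneg hβ0.ne' ha, pw_of_nonpos hβ0.ne' hb.le, sub_neg_eq_add,
      abs_of_nonneg ha, abs_of_neg hb, ← hcdef,
      abs_of_nonneg (by positivity : (0:ℝ) ≤ a ^ β + c ^ β),
      abs_of_nonneg (by linarith : (0:ℝ) ≤ a - b),
      show a - b = a + c by rw [hcdef]; ring]
    set M : ℝ := max a c with hMdef
    have hM0 : 0 < M := lt_of_lt_of_le hc (le_max_right a c)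
    set Q : ℝ := (a ^ q + c ^ q) / 2 with hQdef
    have hQ0 : 0 ≤ Q := by positivity
    have key1 : a ^ β + c ^ β ≤ (a + c) * M ^ (β - 1) := by
      have hMb : 0 ≤ M ^ (β - 1) := Real.rpow_nonneg hM0.le _
      have h1 : a ^ β ≤ a * M ^ (β - 1) := by
        rcases ha.eq_or_lt with ha0 | hapos
        · rw [← ha0, Real.zero_rpow hβ0.ne', zero_mul]
        · calc a ^ β = a * a ^ (β - 1) := by
                nth_rewrite 1 [show β = 1 + (β - 1) by ring]
                rw [Real.rpow_add hapos, Real.rpow_one]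
            _ ≤ a * M ^ (β - 1) :=
                mul_le_mul_of_nonneg_left
                  (Real.rpow_le_rpow ha (le_max_left a c) hβ1) ha
      have h2 : c ^ β ≤ c * M ^ (β - 1) := by
        calc c ^ β = c * c ^ (β - 1) := by
              nth_rewrite 1 [show β = 1 + (β - 1) by ring]
              rw [Real.rpow_add hc, Real.rpow_one]
          _ ≤ c * M ^ (β - 1) :=
              mul_le_mul_of_nonneg_left
                (Real.rpow_le_rpow hc.le (le_max_right a c) hβ1) hc.le
      calc a ^ β + c ^ β ≤ a * M ^ (β-1) + c * M ^ (β-1) := add_le_add h1 h2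
        _ = (a + c) * M ^ (β - 1) := by ring
    have key2 : M ^ (β - 1) ≤ β * Q ^ ((β - 1)/q) := by
      have hMq : M ^ q ≤ 2 * Q := by
        rw [hQdef, mul_div_cancel₀ _ (by norm_num : (2:ℝ) ≠ 0)]
        rcases max_cases a c with ⟨hM, _⟩ | ⟨hM, _⟩ <;> rw [hMdef, hM]
        · nlinarith [Real.rpow_nonneg hc.le q]
        · nlinarith [Real.rpow_nonneg ha q]
      have h3 : M ^ (β - 1) = (M ^ q) ^ ((β - 1)/q) := by
        rw [← Real.rpow_mul hM0.le]
        congr 1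
        field_simp
      rw [h3]
      calc (M ^ q) ^ ((β-1)/q) ≤ (2 * Q) ^ ((β-1)/q) :=
            Real.rpow_le_rpow (Real.rpow_nonneg hM0.le q) hMq (by positivity)
        _ = 2 ^ ((β-1)/q) * Q ^ ((β-1)/q) := Real.mul_rpow (by norm_num) hQ0
        _ ≤ β * Q ^ ((β-1)/q) :=
            mul_le_mul_of_nonneg_right (two_rpow_beta hβ hq) (Real.rpow_nonneg hQ0 _)
    calc a ^ β + c ^ β ≤ (a + c) * M ^ (β - 1) := key1
      _ ≤ (a + c) * (β * Q ^ ((β - 1)/q)) :=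
          mul_le_mul_of_nonneg_left key2 (by linarith)
      _ = β * Q ^ ((β - 1)/q) * (a + c) := by ring

lemma pw_lipB_half {β q a b : ℝ} (hβ : 1 ≤ β) (hq : β ≤ q) (hba : b ≤ a) :
    |pw β a - pw β b| ≤ β * ((|a| ^ q + |b| ^ q) / 2) ^ ((β - 1)/q) * |a - b| := by
  rcases le_or_gt 0 a with ha | ha
  · exact pw_lipB_aux hβ hq ha hba
  · have h := pw_lipB_aux hβ hq (a := -b) (b := -a) (by linarith) (by linarith)
    rw [pw_neg, pw_neg, show -pw β b - -pw β a = -(pw β b - pw β a) by ring, abs_neg,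
      abs_sub_comm (pw β b), abs_neg, abs_neg, show -b - -a = -(b - a) by ring, abs_neg,
      abs_sub_comm b, add_comm (|b| ^ q)] at h
    exact h

lemma pw_lipB {β q a b : ℝ} (hβ : 1 ≤ β) (hq : β ≤ q) :
    |pw β a - pw β b| ≤ β * ((|a| ^ q + |b| ^ q) / 2) ^ ((β - 1)/q) * |a - b| := by
  rcases le_total b a with hba | hab
  · exact pw_lipB_half hβ hq hba
  · have h := pw_lipB_half hβ hq hab
    rwa [abs_sub_comm (pw β b), abs_sub_comm b, add_comm (|b| ^ q)] at h

end SGAux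
open SGAux
section GraphAux

variable {V : Type} [Fintype V] [DecidableEq V]

lemma sgEdgeSum_nonneg (G : SimpleGraph V) (F : V → V → ℝ)
    (h : ∀ i j, G.Adj i j → 0 ≤ F i j) : 0 ≤ sgEdgeSum G F := by
  unfold sgEdgeSum
  apply div_nonneg _ (by norm_num : (0:ℝ) ≤ 2)
  apply Finset.sum_nonneg; intro i _
  apply Finset.sum_nonneg; intro j _
  split_ifs with h'
  · exact h i j h'
  · exact le_refl 0

lemma sgEdgeSum_mono (G : SimpleGraph V) (F F' : V → V → ℝ)
    (h : ∀ i j, G.Adj i j → F i j ≤ F' i j) : sgEdgeSum G F ≤ sgEdgeSum G F' := by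
  unfold sgEdgeSum
  rw [div_le_div_iff_of_pos_right (by norm_num : (0:ℝ) < 2)]
  apply Finset.sum_le_sum; intro i _
  apply Finset.sum_le_sum; intro j _
  split_ifs with h'
  · exact h i j h'
  · exact le_refl 0

lemma sgEdgeSum_const_mul (G : SimpleGraph V) (c : ℝ) (F : V → V → ℝ) :
    sgEdgeSum G (fun i j => c * F i j) = c * sgEdgeSum G F := by
  show (∑ i : V, ∑ j : V, if G.Adj i j then c * F i j else 0) / 2
      = c * ((∑ i : V, ∑ j : V, if G.Adj i j then F i j else 0) / 2)
  have e : ∀ i j : V, (if G.Adj i j then c * F i j else 0)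
      = c * (if G.Adj i j then F i j else 0) := by
    intro i j; rw [mul_ite, mul_zero]
  simp only [e, ← Finset.mul_sum]
  ring

lemma sgRayleigh_nonneg (G : SimpleGraph V) (w sgn : V → V → ℝ) (μ κ : V → ℝ) (p : ℝ)
    (hw : ∀ i j, G.Adj i j → 0 < w i j) (hκ : ∀ i, 0 ≤ κ i) (hμ : ∀ i, 0 < μ i)
    (f : V → ℝ) : 0 ≤ sgRayleigh G w sgn μ κ p f := by
  unfold sgRayleigh
  apply div_nonneg
  · apply add_nonneg
    · exact sgEdgeSum_nonneg _ _ fun i j hij =>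
        mul_nonneg (hw i j hij).le (Real.rpow_nonneg (abs_nonneg _) _)
    · exact Finset.sum_nonneg fun i _ =>
        mul_nonneg (hκ i) (Real.rpow_nonneg (abs_nonneg _) _)
  · exact Finset.sum_nonneg fun i _ =>
      mul_nonneg (hμ i).le (Real.rpow_nonneg (abs_nonneg _) _)

/-- The double-sum degree identity. -/
lemma edge_double_sum (G : SimpleGraph V) (w : V → V → ℝ)
    (hwsymm : ∀ i j, w i j = w j i) (φ : V → ℝ) :
    ∑ i : V, ∑ j : V, (if G.Adj i j then w i j * (φ i + φ j) else 0)
      = 2 * ∑ i : V, (∑ j : V, if G.Adj i j then w i j else 0) * φ i := by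
  have split : ∀ i j : V, (if G.Adj i j then w i j * (φ i + φ j) else 0)
      = (if G.Adj i j then w i j * φ i else 0) + (if G.Adj i j then w i j * φ j else 0) := by
    intro i j; split_ifs with h <;> ring
  have first : ∀ i : V, ∑ j : V, (if G.Adj i j then w i j * φ i else 0)
      = (∑ j : V, if G.Adj i j then w i j else 0) * φ i := by
    intro i
    rw [Finset.sum_mul]
    apply Finset.sum_congr rfl; intro j _
    rw [ite_mul, zero_mul]
  have second : ∑ i : V, ∑ j : V, (if G.Adj i j then w i j * φ j else 0)
      = ∑ i : V, (∑ j : V, if G.Adj i j then w i j else 0) * φ i := by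
    rw [Finset.sum_comm]
    apply Finset.sum_congr rfl; intro x _
    have e : ∀ y : V, (if G.Adj y x then w y x * φ x else 0)
        = (if G.Adj x y then w x y * φ x else 0) := by
      intro y
      rw [hwsymm y x]
      exact if_congr (G.adj_comm y x) rfl rfl
    calc ∑ y : V, (if G.Adj y x then w y x * φ x else 0)
        = ∑ y : V, (if G.Adj x y then w x y * φ x else 0) := Finset.sum_congr rfl fun y _ => e y
      _ = (∑ y : V, if G.Adj x y then w x y else 0) * φ x := first x
  calc ∑ i : V, ∑ j : V, (if G.Adj i j then w i j * (φ i + φ j) else 0)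
      = ∑ i : V, (∑ j : V, (if G.Adj i j then w i j * φ i else 0)
          + ∑ j : V, (if G.Adj i j then w i j * φ j else 0)) := by
        apply Finset.sum_congr rfl; intro i _
        simp only [split, Finset.sum_add_distrib]
    _ = ∑ i : V, (∑ j : V, (if G.Adj i j then w i j * φ i else 0))
        + ∑ i : V, ∑ j : V, (if G.Adj i j then w i j * φ j else 0) := Finset.sum_add_distrib
    _ = 2 * ∑ i : V, (∑ j : V, if G.Adj i j then w i j else 0) * φ i := by
        rw [second]
        have : ∑ i : V, (∑ j : V, (if G.Adj i j then w i j * φ i else 0))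
            = ∑ i : V, (∑ j : V, if G.Adj i j then w i j else 0) * φ i :=
          Finset.sum_congr rfl fun i _ => first i
        rw [this]; ring

lemma sgEdgeSum_half (G : SimpleGraph V) (w : V → V → ℝ)
    (hwsymm : ∀ i j, w i j = w j i) (φ : V → ℝ) :
    sgEdgeSum G (fun i j => w i j * ((φ i + φ j)/2))
      = (∑ i : V, (∑ j : V, if G.Adj i j then w i j else 0) * φ i) / 2 := by
  unfold sgEdgeSum
  have e : ∀ i j : V, (if G.Adj i j then w i j * ((φ i + φ j)/2) else 0)
      = (if G.Adj i j then w i j * (φ i + φ j) else 0) / 2 := by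
    intro i j; split_ifs with h <;> ring
  simp only [e, ← Finset.sum_div]
  rw [edge_double_sum G w hwsymm φ]
  ring

/-- The spectral bound parameter `𝒟`. -/
lemma deg_kappa_le_D (G : SimpleGraph V) (w : V → V → ℝ) (μ κ : V → ℝ)
    (hμ : ∀ i, 0 < μ i) (φ : V → ℝ) (hφ : ∀ i, 0 ≤ φ i) :
    ∑ i : V, ((∑ j : V, if G.Adj i j then w i j else 0) * φ i) / 2 + ∑ i : V, κ i * φ i
      ≤ (⨆ i : V, (2 * κ i + ∑ j : V, if G.Adj i j then w i j else 0) / (2 * μ i))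
        * ∑ i : V, μ i * φ i := by
  set D : ℝ := ⨆ i : V, (2 * κ i + ∑ j : V, if G.Adj i j then w i j else 0) / (2 * μ i)
    with hD
  rw [← Finset.sum_add_distrib, Finset.mul_sum]
  apply Finset.sum_le_sum
  intro i _
  set d : ℝ := ∑ j : V, if G.Adj i j then w i j else 0 with hd
  have hDi : (2 * κ i + d) / (2 * μ i) ≤ D := by
    rw [hD]
    have hb : BddAbove (Set.range (fun i : V =>
        (2 * κ i + ∑ j : V, if G.Adj i j then w i j else 0) / (2 * μ i))) :=
      Set.Finite.bddAbove (Set.finite_range _)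
    exact le_ciSup hb i
  have hμi := hμ i
  have key : d / 2 + κ i ≤ D * μ i := by
    have h1 : (2 * κ i + d) / (2 * μ i) * μ i ≤ D * μ i :=
      mul_le_mul_of_nonneg_right hDi hμi.le
    have h2 : (2 * κ i + d) / (2 * μ i) * μ i = d / 2 + κ i := by
      field_simp; ring
    linarith [h2 ▸ h1]
  calc d * φ i / 2 + κ i * φ i = (d / 2 + κ i) * φ i := by ring
    _ ≤ D * μ i * φ i := mul_le_mul_of_nonneg_right key (hφ i)
    _ = D * (μ i * φ i) := by ring

/-- Master numerator bound. -/
lemma num_le_D (G : SimpleGraph V) (w sgn : V → V → ℝ) (μ κ : V → ℝ)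
    (hw : ∀ i j, G.Adj i j → 0 < w i j) (hwsymm : ∀ i j, w i j = w j i)
    (hsgn : ∀ i j, G.Adj i j → sgn i j = 1 ∨ sgn i j = -1)
    (hμ : ∀ i, 0 < μ i) (hκ : ∀ i, 0 ≤ κ i)
    {p : ℝ} (hp : 1 ≤ p) (f : V → ℝ) :
    sgEdgeSum G (fun i j => w i j * |f i - sgn i j * f j| ^ p) + ∑ i : V, κ i * |f i| ^ p
      ≤ (2:ℝ) ^ p * ((⨆ i : V, (2 * κ i + ∑ j : V, if G.Adj i j then w i j else 0) / (2 * μ i))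
          * ∑ i : V, μ i * |f i| ^ p) := by
  set D : ℝ := ⨆ i : V, (2 * κ i + ∑ j : V, if G.Adj i j then w i j else 0) / (2 * μ i)
  set φ : V → ℝ := fun i => |f i| ^ p with hφdef
  have hφ : ∀ i, 0 ≤ φ i := fun i => Real.rpow_nonneg (abs_nonneg _) p
  have h2p1 : (1:ℝ) ≤ 2 ^ p := Real.one_le_rpow one_le_two (by linarith)
  have hedge : ∀ i j, G.Adj i j →
      w i j * |f i - sgn i j * f j| ^ p ≤ 2 ^ p * (w i j * ((φ i + φ j)/2)) := by
    intro i j hij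
    have habs : |f i - sgn i j * f j| ≤ |f i| + |f j| := by
      have h1 : |f i - sgn i j * f j| ≤ |f i| + |sgn i j * f j| := abs_sub _ _
      have h2 : |sgn i j * f j| = |f j| := by
        rw [abs_mul]
        rcases hsgn i j hij with h | h <;> rw [h] <;> norm_num
      linarith [h2 ▸ h1]
    have hr : |f i - sgn i j * f j| ^ p ≤ (|f i| + |f j|) ^ p :=
      Real.rpow_le_rpow (abs_nonneg _) habs (by linarith)
    have hc := rpow_convex2 (abs_nonneg (f i)) (abs_nonneg (f j)) hp
    have h2 : (2:ℝ) ^ (p - 1) * (φ i + φ j) = 2 ^ p * ((φ i + φ j)/2) := by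
      rw [Real.rpow_sub (by norm_num : (0:ℝ) < 2), Real.rpow_one]
      ring
    have : |f i - sgn i j * f j| ^ p ≤ 2 ^ p * ((φ i + φ j)/2) := by
      calc |f i - sgn i j * f j| ^ p ≤ (|f i| + |f j|) ^ p := hr
        _ ≤ 2 ^ (p-1) * (φ i + φ j) := hc
        _ = 2 ^ p * ((φ i + φ j)/2) := h2
    calc w i j * |f i - sgn i j * f j| ^ p ≤ w i j * (2 ^ p * ((φ i + φ j)/2)) :=
          mul_le_mul_of_nonneg_left this (hw i j hij).le
      _ = 2 ^ p * (w i j * ((φ i + φ j)/2)) := by ring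
  have hES : sgEdgeSum G (fun i j => w i j * |f i - sgn i j * f j| ^ p)
      ≤ 2 ^ p * sgEdgeSum G (fun i j => w i j * ((φ i + φ j)/2)) := by
    calc sgEdgeSum G (fun i j => w i j * |f i - sgn i j * f j| ^ p)
        ≤ sgEdgeSum G (fun i j => (2:ℝ) ^ p * (w i j * ((φ i + φ j)/2))) :=
          sgEdgeSum_mono G _ _ hedge
      _ = 2 ^ p * sgEdgeSum G (fun i j => w i j * ((φ i + φ j)/2)) :=
          sgEdgeSum_const_mul G ((2:ℝ) ^ p) (fun i j => w i j * ((φ i + φ j)/2))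
  have hEhalf := sgEdgeSum_half G w hwsymm φ
  have hver : ∑ i : V, κ i * φ i ≤ 2 ^ p * ∑ i : V, κ i * φ i := by
    have h0 : 0 ≤ ∑ i : V, κ i * φ i :=
      Finset.sum_nonneg fun i _ => mul_nonneg (hκ i) (hφ i)
    nlinarith
  have hDD := deg_kappa_le_D G w μ κ hμ φ hφ
  have hsumdiv : ∑ i : V, ((∑ j : V, if G.Adj i j then w i j else 0) * φ i) / 2
      = (∑ i : V, (∑ j : V, if G.Adj i j then w i j else 0) * φ i) / 2 :=
    (Finset.sum_div _ _ _).symm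
  calc sgEdgeSum G (fun i j => w i j * |f i - sgn i j * f j| ^ p) + ∑ i : V, κ i * φ i
      ≤ 2 ^ p * sgEdgeSum G (fun i j => w i j * ((φ i + φ j)/2)) + 2 ^ p * ∑ i : V, κ i * φ i := by
        linarith
    _ = 2 ^ p * (sgEdgeSum G (fun i j => w i j * ((φ i + φ j)/2)) + ∑ i : V, κ i * φ i) := by ring
    _ ≤ 2 ^ p * (D * ∑ i : V, μ i * φ i) := by
        apply mul_le_mul_of_nonneg_left _ (by positivity : (0:ℝ) ≤ 2 ^ p)
        rw [hEhalf]
        calc (∑ i : V, (∑ j : V, if G.Adj i j then w i j else 0) * φ i) / 2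
              + ∑ i : V, κ i * φ i
            = ∑ i : V, ((∑ j : V, if G.Adj i j then w i j else 0) * φ i) / 2
              + ∑ i : V, κ i * φ i := by rw [hsumdiv]
          _ ≤ D * ∑ i : V, μ i * φ i := hDD

/-- The Rayleigh quotient on the sphere is bounded by `2^p 𝒟`. -/
lemma rayleigh_le_D (G : SimpleGraph V) (w sgn : V → V → ℝ) (μ κ : V → ℝ)
    (hw : ∀ i j, G.Adj i j → 0 < w i j) (hwsymm : ∀ i j, w i j = w j i)
    (hsgn : ∀ i j, G.Adj i j → sgn i j = 1 ∨ sgn i j = -1)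
    (hμ : ∀ i, 0 < μ i) (hκ : ∀ i, 0 ≤ κ i)
    {p : ℝ} (hp : 1 ≤ p) {f : V → ℝ} (hf : f ∈ pSphere μ p) :
    sgRayleigh G w sgn μ κ p f
      ≤ (2:ℝ) ^ p * (⨆ i : V, (2 * κ i + ∑ j : V, if G.Adj i j then w i j else 0) / (2 * μ i)) := by
  have hden : ∑ i : V, μ i * |f i| ^ p = 1 := hf
  unfold sgRayleigh
  rw [hden, div_one]
  have h := num_le_D G w sgn μ κ hw hwsymm hsgn hμ hκ hp f
  rw [hden, mul_one] at h
  exact h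

/-- Coordinatewise odd power map. -/
noncomputable def Pw (α : ℝ) (f : V → ℝ) : V → ℝ := fun i => pw α (f i)

lemma continuous_Pw {α : ℝ} (hα : 0 < α) : Continuous (Pw (V := V) α) :=
  continuous_pi fun i => (continuous_pw hα).comp (continuous_apply i)

lemma Pw_neg (α : ℝ) (f : V → ℝ) : Pw α (-f) = -(Pw α f) := by
  funext i
  simp only [Pw, Pi.neg_apply]
  exact pw_neg α (f i)

lemma Pw_Pw {α β : ℝ} (hα : 0 < α) (hβ : 0 < β) (f : V → ℝ) :
    Pw α (Pw β f) = Pw (α * β) f := by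
  funext i
  exact pw_pw hα hβ (f i)

lemma Pw_one (f : V → ℝ) : Pw 1 f = f := by
  funext i
  exact pw_one (f i)

lemma abs_Pw_rpow {a b : ℝ} (ha : 0 < a) (hb : 0 < b) (t : ℝ) :
    |pw (a/b) t| ^ b = |t| ^ a := by
  rw [abs_pw (by positivity : a/b ≠ 0), ← Real.rpow_mul (abs_nonneg t),
    div_mul_cancel₀ _ hb.ne']

lemma Pw_mem_sphere {μ : V → ℝ} {a b : ℝ} (ha : 0 < a) (hb : 0 < b) {f : V → ℝ}
    (hf : f ∈ pSphere μ a) : Pw (a/b) f ∈ pSphere μ b := by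
  show ∑ i : V, μ i * |Pw (a/b) f i| ^ b = 1
  have : ∀ i : V, μ i * |Pw (a/b) f i| ^ b = μ i * |f i| ^ a := by
    intro i
    rw [show Pw (a/b) f i = pw (a/b) (f i) from rfl, abs_Pw_rpow ha hb]
  rw [Finset.sum_congr rfl fun i _ => this i]
  exact hf

lemma Pw_image_genusFamily {μ : V → ℝ} {a b : ℝ} (ha : 0 < a) (hb : 0 < b) {k : ℕ}
    {B : Set (V → ℝ)} (hB : B ∈ genusFamily μ a k) :
    Pw (a/b) '' B ∈ genusFamily μ b k := by
  obtain ⟨hsub, hclosed, hsymm, hgenus⟩ := hB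
  have hab : (0:ℝ) < a/b := by positivity
  have hba : (0:ℝ) < b/a := by positivity
  have hinv : ∀ g : V → ℝ, Pw (a/b) (Pw (b/a) g) = g := by
    intro g
    rw [Pw_Pw hab hba, div_mul_div_comm, mul_comm b a, div_self (by positivity : a * b ≠ 0),
      Pw_one]
  have hinv' : ∀ f : V → ℝ, Pw (b/a) (Pw (a/b) f) = f := by
    intro f
    rw [Pw_Pw hba hab, div_mul_div_comm, mul_comm a b, div_self (by positivity : b * a ≠ 0),
      Pw_one]
  refine ⟨?_, ?_, ?_, ?_⟩
  · rintro g ⟨f, hfB, rfl⟩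
    exact Pw_mem_sphere ha hb (hsub hfB)
  · have himg : Pw (a/b) '' B = Pw (b/a) ⁻¹' B := by
      ext g
      constructor
      · rintro ⟨f, hfB, rfl⟩
        show Pw (b/a) (Pw (a/b) f) ∈ B
        rw [hinv']
        exact hfB
      · intro hg
        exact ⟨Pw (b/a) g, hg, hinv g⟩
    rw [himg]
    exact hclosed.preimage (continuous_Pw hba)
  · rintro g ⟨f, hfB, rfl⟩
    refine ⟨-f, hsymm f hfB, ?_⟩
    rw [Pw_neg]
  · intro m hm hodd
    apply hgenus m hm
    obtain ⟨h, hcont, hnz, hoddmap⟩ := hodd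
    refine ⟨h ∘ Pw (a/b), ?_, ?_, ?_⟩
    · exact hcont.comp (continuous_Pw hab).continuousOn (Set.mapsTo_image _ _)
    · intro x hx
      exact hnz _ (Set.mem_image_of_mem _ hx)
    · intro x hx
      show h (Pw (a/b) (-x)) = -(h (Pw (a/b) x))
      rw [Pw_neg]
      exact hoddmap _ (Set.mem_image_of_mem _ hx)

lemma rpow_theta_self {x θ : ℝ} (hx : 0 ≤ x) (hθ0 : θ ≠ 0) (hθ1 : 1 - θ ≠ 0) :
    x = x ^ θ * x ^ (1 - θ) := by
  rcases hx.eq_or_lt with h0 | hpos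
  · rw [← h0, Real.zero_rpow hθ0, zero_mul]
  · rw [← Real.rpow_add hpos, show θ + (1 - θ) = 1 by ring, Real.rpow_one]

/-- First comparison: `R_q(Pw_{p/q} f) ≤ 2^{q-p} R_p(f)` on the `p`-sphere. -/
lemma rayleigh_compare_A (G : SimpleGraph V) (w sgn : V → V → ℝ) (μ κ : V → ℝ)
    (hw : ∀ i j, G.Adj i j → 0 < w i j)
    (hsgn : ∀ i j, G.Adj i j → sgn i j = 1 ∨ sgn i j = -1)
    (hκ : ∀ i, 0 ≤ κ i)
    {p q : ℝ} (hp : 0 < p) (hpq : p ≤ q) {f : V → ℝ} (hf : f ∈ pSphere μ p) :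
    sgRayleigh G w sgn μ κ q (Pw (p/q) f) ≤ 2 ^ (q - p) * sgRayleigh G w sgn μ κ p f := by
  have hq : 0 < q := lt_of_lt_of_le hp hpq
  have hα0 : 0 < p/q := by positivity
  have hα1 : p/q ≤ 1 := by rw [div_le_one hq]; exact hpq
  have hdenf : ∑ i : V, μ i * |f i| ^ p = 1 := hf
  have hdeng : ∑ i : V, μ i * |Pw (p/q) f i| ^ q = 1 := Pw_mem_sphere hp hq hf
  unfold sgRayleigh
  rw [hdenf, hdeng, div_one, div_one]
  have hedge : ∀ i j, G.Adj i j →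
      w i j * |Pw (p/q) f i - sgn i j * Pw (p/q) f j| ^ q
        ≤ 2 ^ (q - p) * (w i j * |f i - sgn i j * f j| ^ p) := by
    intro i j hij
    have hσ := hsgn i j hij
    have e1 : sgn i j * Pw (p/q) f j = pw (p/q) (sgn i j * f j) := (pw_sign hσ _ _).symm
    have hX : (0:ℝ) ≤ |f i - sgn i j * f j| := abs_nonneg _
    have habs : |Pw (p/q) f i - sgn i j * Pw (p/q) f j|
        ≤ 2 ^ (1 - p/q) * |f i - sgn i j * f j| ^ (p/q) := by
      rw [show Pw (p/q) f i = pw (p/q) (f i) from rfl, e1]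
      exact pw_lipA hα0 hα1
    have hpow := Real.rpow_le_rpow (abs_nonneg _) habs hq.le
    rw [Real.mul_rpow (by positivity) (Real.rpow_nonneg hX _), ← Real.rpow_mul (by norm_num),
      ← Real.rpow_mul hX, show (1 - p/q) * q = q - p by field_simp,
      show p/q * q = p by field_simp] at hpow
    calc w i j * |Pw (p/q) f i - sgn i j * Pw (p/q) f j| ^ q
        ≤ w i j * (2 ^ (q-p) * |f i - sgn i j * f j| ^ p) :=
          mul_le_mul_of_nonneg_left hpow (hw i j hij).le
      _ = 2 ^ (q - p) * (w i j * |f i - sgn i j * f j| ^ p) := by ring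
  have hES : sgEdgeSum G (fun i j => w i j * |Pw (p/q) f i - sgn i j * Pw (p/q) f j| ^ q)
      ≤ 2 ^ (q - p) * sgEdgeSum G (fun i j => w i j * |f i - sgn i j * f j| ^ p) := by
    calc sgEdgeSum G (fun i j => w i j * |Pw (p/q) f i - sgn i j * Pw (p/q) f j| ^ q)
        ≤ sgEdgeSum G (fun i j => (2:ℝ) ^ (q - p) * (w i j * |f i - sgn i j * f j| ^ p)) :=
          sgEdgeSum_mono G _ _ hedge
      _ = 2 ^ (q - p) * sgEdgeSum G (fun i j => w i j * |f i - sgn i j * f j| ^ p) :=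
          sgEdgeSum_const_mul G _ _
  have hver : ∑ i : V, κ i * |Pw (p/q) f i| ^ q
      ≤ 2 ^ (q - p) * ∑ i : V, κ i * |f i| ^ p := by
    have e : ∀ i : V, κ i * |Pw (p/q) f i| ^ q = κ i * |f i| ^ p := by
      intro i
      rw [show Pw (p/q) f i = pw (p/q) (f i) from rfl, abs_Pw_rpow hp hq]
    rw [Finset.sum_congr rfl fun i _ => e i]
    have h0 : 0 ≤ ∑ i : V, κ i * |f i| ^ p :=
      Finset.sum_nonneg fun i _ => mul_nonneg (hκ i) (Real.rpow_nonneg (abs_nonneg _) _)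
    have h2qp : (1:ℝ) ≤ 2 ^ (q - p) := Real.one_le_rpow one_le_two (by linarith)
    nlinarith
  linarith

/-- Second comparison: `R_p(Pw_{q/p} g) ≤ (q/p)^p R_q(g)^{p/q} 𝒟^{1-p/q}` on the `q`-sphere. -/
lemma rayleigh_compare_B (G : SimpleGraph V) (w sgn : V → V → ℝ) (μ κ : V → ℝ)
    (hw : ∀ i j, G.Adj i j → 0 < w i j) (hwsymm : ∀ i j, w i j = w j i)
    (hsgn : ∀ i j, G.Adj i j → sgn i j = 1 ∨ sgn i j = -1)
    (hμ : ∀ i, 0 < μ i) (hκ : ∀ i, 0 ≤ κ i)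
    {p q : ℝ} (hp : 1 ≤ p) (hpq : p < q) {g : V → ℝ} (hg : g ∈ pSphere μ q) :
    sgRayleigh G w sgn μ κ p (Pw (q/p) g)
      ≤ (q/p) ^ p * (sgRayleigh G w sgn μ κ q g) ^ (p/q)
        * (⨆ i : V, (2 * κ i + ∑ j : V, if G.Adj i j then w i j else 0) / (2 * μ i))
          ^ (1 - p/q) := by
  have hp0 : (0:ℝ) < p := by linarith
  have hq0 : (0:ℝ) < q := by linarith
  have hβ1 : (1:ℝ) ≤ q/p := by rw [le_div_iff₀ hp0]; linarith
  have hβq : q/p ≤ q := by rw [div_le_iff₀ hp0]; nlinarith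
  have hθ0 : (0:ℝ) < p/q := by positivity
  have hθ1 : p/q < 1 := by rw [div_lt_one hq0]; exact hpq
  have hθ1' : (1:ℝ) - p/q ≠ 0 := by
    have : (0:ℝ) < 1 - p/q := by linarith
    exact this.ne'
  have hβp1 : (1:ℝ) ≤ (q/p) ^ p := Real.one_le_rpow hβ1 hp0.le
  set θ : ℝ := p/q with hθdef
  set β : ℝ := q/p with hβdef
  set D : ℝ := ⨆ i : V, (2 * κ i + ∑ j : V, if G.Adj i j then w i j else 0) / (2 * μ i)
    with hDdef
  have hDn : 0 ≤ D := by
    rw [hDdef]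
    apply Real.iSup_nonneg
    intro i
    apply div_nonneg _ (by linarith [hμ i] : (0:ℝ) ≤ 2 * μ i)
    have : 0 ≤ ∑ j : V, if G.Adj i j then w i j else 0 := by
      apply Finset.sum_nonneg; intro j _
      split_ifs with h
      · exact (hw i j h).le
      · exact le_refl 0
    linarith [hκ i]
  have hdeng : ∑ i : V, μ i * |g i| ^ q = 1 := hg
  have hdenf : ∑ i : V, μ i * |Pw β g i| ^ p = 1 := by
    have h := Pw_mem_sphere hq0 hp0 hg
    rw [← hβdef] at h
    exact h
  unfold sgRayleigh
  rw [hdeng, hdenf, div_one, div_one]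
  set A1 : ℝ := sgEdgeSum G (fun i j => w i j * |g i - sgn i j * g j| ^ q) with hA1
  set A2 : ℝ := ∑ i : V, κ i * |g i| ^ q with hA2
  set B1 : ℝ := sgEdgeSum G (fun i j => w i j * ((|g i| ^ q + |g j| ^ q)/2)) with hB1
  have hA1n : 0 ≤ A1 := sgEdgeSum_nonneg _ _ fun i j hij =>
    mul_nonneg (hw i j hij).le (Real.rpow_nonneg (abs_nonneg _) _)
  have hA2n : 0 ≤ A2 := Finset.sum_nonneg fun i _ =>
    mul_nonneg (hκ i) (Real.rpow_nonneg (abs_nonneg _) _)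
  have hB1n : 0 ≤ B1 := sgEdgeSum_nonneg _ _ fun i j hij =>
    mul_nonneg (hw i j hij).le (by positivity)
  have hβpn : (0:ℝ) ≤ β ^ p := Real.rpow_nonneg (by positivity) _
  -- per-edge bound
  have hedge : ∀ i j, G.Adj i j →
      w i j * |Pw β g i - sgn i j * Pw β g j| ^ p
        ≤ β ^ p * ((w i j * |g i - sgn i j * g j| ^ q) ^ θ
            * (w i j * ((|g i| ^ q + |g j| ^ q)/2)) ^ (1 - θ)) := by
    intro i j hij
    have hσ := hsgn i j hij
    have hσabs : |sgn i j * g j| = |g j| := by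
      rw [abs_mul]
      rcases hσ with h | h <;> rw [h] <;> norm_num
    have e1 : sgn i j * Pw β g j = pw β (sgn i j * g j) := (pw_sign hσ _ _).symm
    have hXn : (0:ℝ) ≤ |g i - sgn i j * g j| := abs_nonneg _
    have hQn : (0:ℝ) ≤ (|g i| ^ q + |g j| ^ q)/2 := by positivity
    have lip : |Pw β g i - sgn i j * Pw β g j|
        ≤ β * ((|g i| ^ q + |g j| ^ q)/2) ^ ((β - 1)/q) * |g i - sgn i j * g j| := by
      rw [show Pw β g i = pw β (g i) from rfl, e1]
      have h := pw_lipB (a := g i) (b := sgn i j * g j) hβ1 hβq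
      rwa [hσabs] at h
    have hpow := Real.rpow_le_rpow (abs_nonneg _) lip hp0.le
    rw [Real.mul_rpow (by positivity) hXn,
      Real.mul_rpow (by positivity : (0:ℝ) ≤ β) (Real.rpow_nonneg hQn _),
      ← Real.rpow_mul hQn,
      show (β - 1)/q * p = 1 - θ by rw [hβdef, hθdef]; field_simp] at hpow
    have eX : |g i - sgn i j * g j| ^ p = (|g i - sgn i j * g j| ^ q) ^ θ := by
      rw [← Real.rpow_mul hXn]
      congr 1
      rw [hθdef]
      field_simp
    have hw' : w i j = w i j ^ θ * w i j ^ (1 - θ) :=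
      rpow_theta_self (hw i j hij).le hθ0.ne' hθ1'
    calc w i j * |Pw β g i - sgn i j * Pw β g j| ^ p
        ≤ w i j * (β ^ p * ((|g i| ^ q + |g j| ^ q)/2) ^ (1 - θ)
            * |g i - sgn i j * g j| ^ p) :=
          mul_le_mul_of_nonneg_left hpow (hw i j hij).le
      _ = β ^ p * ((w i j ^ θ * (|g i - sgn i j * g j| ^ q) ^ θ)
            * (w i j ^ (1 - θ) * ((|g i| ^ q + |g j| ^ q)/2) ^ (1 - θ))) := by
          nth_rewrite 1 [hw']
          rw [eX]
          ring
      _ = β ^ p * ((w i j * |g i - sgn i j * g j| ^ q) ^ θ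
            * (w i j * ((|g i| ^ q + |g j| ^ q)/2)) ^ (1 - θ)) := by
          rw [Real.mul_rpow (hw i j hij).le (Real.rpow_nonneg hXn q),
            Real.mul_rpow (hw i j hij).le hQn]
  -- Hölder aggregation over edges
  have hsum_edge : sgEdgeSum G (fun i j => w i j * |Pw β g i - sgn i j * Pw β g j| ^ p)
      ≤ β ^ p * (A1 ^ θ * B1 ^ (1 - θ)) := by
    have hH := holder_finset (Finset.univ (α := V × V))
      (fun z => if G.Adj z.1 z.2 then w z.1 z.2 * |g z.1 - sgn z.1 z.2 * g z.2| ^ q else 0)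
      (fun z => if G.Adj z.1 z.2 then w z.1 z.2 * ((|g z.1| ^ q + |g z.2| ^ q)/2) else 0)
      (by
        intro z _
        split_ifs with h
        · exact mul_nonneg (hw _ _ h).le (Real.rpow_nonneg (abs_nonneg _) _)
        · exact le_refl 0)
      (by
        intro z _
        split_ifs with h
        · exact mul_nonneg (hw _ _ h).le (by positivity)
        · exact le_refl 0)
      hθ0 hθ1
    have hterm : ∀ z : V × V,
        (if G.Adj z.1 z.2 then w z.1 z.2 * |Pw β g z.1 - sgn z.1 z.2 * Pw β g z.2| ^ p else 0)
          ≤ β ^ p * ((if G.Adj z.1 z.2 then w z.1 z.2 * |g z.1 - sgn z.1 z.2 * g z.2| ^ q else 0) ^ θ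
            * (if G.Adj z.1 z.2 then w z.1 z.2 * ((|g z.1| ^ q + |g z.2| ^ q)/2) else 0) ^ (1 - θ)) := by
      intro z
      by_cases hadj : G.Adj z.1 z.2
      · rw [if_pos hadj, if_pos hadj, if_pos hadj]
        exact hedge z.1 z.2 hadj
      · rw [if_neg hadj, if_neg hadj, if_neg hadj, Real.zero_rpow hθ0.ne', zero_mul, mul_zero]
    have hsum_u : (∑ z : V × V,
        if G.Adj z.1 z.2 then w z.1 z.2 * |g z.1 - sgn z.1 z.2 * g z.2| ^ q else 0) = 2 * A1 := by
      rw [Fintype.sum_prod_type]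
      rw [hA1]
      unfold sgEdgeSum
      ring
    have hsum_v : (∑ z : V × V,
        if G.Adj z.1 z.2 then w z.1 z.2 * ((|g z.1| ^ q + |g z.2| ^ q)/2) else 0) = 2 * B1 := by
      rw [Fintype.sum_prod_type]
      rw [hB1]
      unfold sgEdgeSum
      ring
    have hstep : (∑ z : V × V,
        if G.Adj z.1 z.2 then w z.1 z.2 * |Pw β g z.1 - sgn z.1 z.2 * Pw β g z.2| ^ p else 0)
          ≤ β ^ p * ((2 * A1) ^ θ * (2 * B1) ^ (1 - θ)) := by
      calc (∑ z : V × V,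
          if G.Adj z.1 z.2 then w z.1 z.2 * |Pw β g z.1 - sgn z.1 z.2 * Pw β g z.2| ^ p else 0)
          ≤ ∑ z : V × V, β ^ p
            * ((if G.Adj z.1 z.2 then w z.1 z.2 * |g z.1 - sgn z.1 z.2 * g z.2| ^ q else 0) ^ θ
            * (if G.Adj z.1 z.2 then w z.1 z.2 * ((|g z.1| ^ q + |g z.2| ^ q)/2) else 0) ^ (1 - θ)) :=
            Finset.sum_le_sum fun z _ => hterm z
        _ = β ^ p * ∑ z : V × V,
            (if G.Adj z.1 z.2 then w z.1 z.2 * |g z.1 - sgn z.1 z.2 * g z.2| ^ q else 0) ^ θ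
            * (if G.Adj z.1 z.2 then w z.1 z.2 * ((|g z.1| ^ q + |g z.2| ^ q)/2) else 0) ^ (1 - θ) := by
            rw [Finset.mul_sum]
        _ ≤ β ^ p * ((∑ z : V × V,
            if G.Adj z.1 z.2 then w z.1 z.2 * |g z.1 - sgn z.1 z.2 * g z.2| ^ q else 0) ^ θ
            * (∑ z : V × V,
            if G.Adj z.1 z.2 then w z.1 z.2 * ((|g z.1| ^ q + |g z.2| ^ q)/2) else 0) ^ (1 - θ)) :=
            mul_le_mul_of_nonneg_left hH hβpn
        _ = β ^ p * ((2 * A1) ^ θ * (2 * B1) ^ (1 - θ)) := by rw [hsum_u, hsum_v]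
    have hfactor : (2 * A1) ^ θ * (2 * B1) ^ (1 - θ) = 2 * (A1 ^ θ * B1 ^ (1 - θ)) := by
      rw [Real.mul_rpow (by norm_num) hA1n, Real.mul_rpow (by norm_num) hB1n,
        show (2:ℝ) ^ θ * A1 ^ θ * ((2:ℝ) ^ (1-θ) * B1 ^ (1-θ))
          = ((2:ℝ) ^ θ * (2:ℝ) ^ (1-θ)) * (A1 ^ θ * B1 ^ (1-θ)) by ring,
        ← Real.rpow_add (by norm_num : (0:ℝ) < 2), show θ + (1 - θ) = 1 by ring,
        Real.rpow_one]
    rw [Fintype.sum_prod_type, hfactor] at hstep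
    show (∑ i : V, ∑ j : V,
        if G.Adj i j then w i j * |Pw β g i - sgn i j * Pw β g j| ^ p else 0) / 2
      ≤ β ^ p * (A1 ^ θ * B1 ^ (1 - θ))
    linarith
  -- vertex terms
  have hverteq : ∑ i : V, κ i * |Pw β g i| ^ p = A2 := by
    rw [hA2]
    apply Finset.sum_congr rfl
    intro i _
    rw [show Pw β g i = pw β (g i) from rfl, hβdef, abs_Pw_rpow hq0 hp0]
  have hB1A2 : B1 + A2 ≤ D := by
    have h1 : B1 = (∑ i : V, (∑ j : V, if G.Adj i j then w i j else 0) * |g i| ^ q) / 2 :=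
      sgEdgeSum_half G w hwsymm (fun i => |g i| ^ q)
    have h2 := deg_kappa_le_D G w μ κ hμ (fun i => |g i| ^ q)
      (fun i => Real.rpow_nonneg (abs_nonneg _) _)
    rw [← hDdef] at h2
    have h3 : ∑ i : V, μ i * |g i| ^ q = 1 := hdeng
    have h4 : ∑ i : V, ((∑ j : V, if G.Adj i j then w i j else 0) * |g i| ^ q) / 2
        = (∑ i : V, (∑ j : V, if G.Adj i j then w i j else 0) * |g i| ^ q) / 2 :=
      (Finset.sum_div _ _ _).symm
    have h5 : A2 = ∑ i : V, κ i * |g i| ^ q := hA2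
    rw [h4, h3, mul_one] at h2
    rw [h1, h5]
    exact h2
  -- assemble
  have hH2 := holder_two hA1n hB1n hA2n hA2n hθ0 hθ1
  have hA2split : A2 = A2 ^ θ * A2 ^ (1 - θ) := rpow_theta_self hA2n hθ0.ne' hθ1'
  have hmix : 0 ≤ A1 ^ θ * B1 ^ (1 - θ) :=
    mul_nonneg (Real.rpow_nonneg hA1n _) (Real.rpow_nonneg hB1n _)
  have hfinal1 : sgEdgeSum G (fun i j => w i j * |Pw β g i - sgn i j * Pw β g j| ^ p)
      + ∑ i : V, κ i * |Pw β g i| ^ p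
      ≤ β ^ p * ((A1 + A2) ^ θ * (B1 + A2) ^ (1 - θ)) := by
    have c1 : sgEdgeSum G (fun i j => w i j * |Pw β g i - sgn i j * Pw β g j| ^ p)
        + ∑ i : V, κ i * |Pw β g i| ^ p
        ≤ β ^ p * (A1 ^ θ * B1 ^ (1 - θ)) + A2 ^ θ * A2 ^ (1 - θ) := by
      rw [hverteq] at *
      nlinarith [hsum_edge, hA2split]
    have c2 : β ^ p * (A1 ^ θ * B1 ^ (1 - θ)) + A2 ^ θ * A2 ^ (1 - θ)
        ≤ β ^ p * (A1 ^ θ * B1 ^ (1 - θ) + A2 ^ θ * A2 ^ (1 - θ)) := by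
      have hA2m : 0 ≤ A2 ^ θ * A2 ^ (1 - θ) :=
        mul_nonneg (Real.rpow_nonneg hA2n _) (Real.rpow_nonneg hA2n _)
      nlinarith
    have c3 : β ^ p * (A1 ^ θ * B1 ^ (1 - θ) + A2 ^ θ * A2 ^ (1 - θ))
        ≤ β ^ p * ((A1 + A2) ^ θ * (B1 + A2) ^ (1 - θ)) :=
      mul_le_mul_of_nonneg_left hH2 hβpn
    linarith
  have hfinal2 : (B1 + A2) ^ (1 - θ) ≤ D ^ (1 - θ) :=
    Real.rpow_le_rpow (by linarith) hB1A2 (by linarith)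
  calc sgEdgeSum G (fun i j => w i j * |Pw β g i - sgn i j * Pw β g j| ^ p)
      + ∑ i : V, κ i * |Pw β g i| ^ p
      ≤ β ^ p * ((A1 + A2) ^ θ * (B1 + A2) ^ (1 - θ)) := hfinal1
    _ ≤ β ^ p * ((A1 + A2) ^ θ * D ^ (1 - θ)) := by
        apply mul_le_mul_of_nonneg_left _ hβpn
        exact mul_le_mul_of_nonneg_left hfinal2 (Real.rpow_nonneg (by linarith) _)
    _ = β ^ p * (A1 + A2) ^ θ * D ^ (1 - θ) := by ring

lemma valueSet_nonneg (G : SimpleGraph V) (w sgn : V → V → ℝ) (μ κ : V → ℝ)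
    (hw : ∀ i j, G.Adj i j → 0 < w i j) (hκ : ∀ i, 0 ≤ κ i) (hμ : ∀ i, 0 < μ i)
    (p : ℝ) (k : ℕ) :
    ∀ x ∈ (fun B => sSup (sgRayleigh G w sgn μ κ p '' B)) '' genusFamily μ p k, 0 ≤ x := by
  rintro x ⟨B, _, rfl⟩
  apply Real.sSup_nonneg
  rintro y ⟨f, _, rfl⟩
  exact sgRayleigh_nonneg G w sgn μ κ p hw hκ hμ f

lemma varEig_nonneg (G : SimpleGraph V) (w sgn : V → V → ℝ) (μ κ : V → ℝ)
    (hw : ∀ i j, G.Adj i j → 0 < w i j) (hκ : ∀ i, 0 ≤ κ i) (hμ : ∀ i, 0 < μ i)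
    (p : ℝ) (k : ℕ) : 0 ≤ varEig G w sgn μ κ p k :=
  Real.sInf_nonneg (valueSet_nonneg G w sgn μ κ hw hκ hμ p k)

lemma bddAbove_rayleigh (G : SimpleGraph V) (w sgn : V → V → ℝ) (μ κ : V → ℝ)
    (hw : ∀ i j, G.Adj i j → 0 < w i j) (hwsymm : ∀ i j, w i j = w j i)
    (hsgn : ∀ i j, G.Adj i j → sgn i j = 1 ∨ sgn i j = -1)
    (hμ : ∀ i, 0 < μ i) (hκ : ∀ i, 0 ≤ κ i)
    {p : ℝ} (hp : 1 ≤ p) {B : Set (V → ℝ)} (hB : B ⊆ pSphere μ p) :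
    BddAbove (sgRayleigh G w sgn μ κ p '' B) := by
  refine ⟨(2:ℝ) ^ p * (⨆ i : V, (2 * κ i + ∑ j : V, if G.Adj i j then w i j else 0) / (2 * μ i)), ?_⟩
  rintro y ⟨f, hf, rfl⟩
  exact rayleigh_le_D G w sgn μ κ hw hwsymm hsgn hμ hκ hp (hB hf)

theorem monotonicity_main
    {V : Type} [Fintype V] [DecidableEq V]
    (G : SimpleGraph V) (w sgn : V → V → ℝ) (μ κ : V → ℝ)
    (hw : ∀ i j, G.Adj i j → 0 < w i j) (hwsymm : ∀ i j, w i j = w j i)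
    (hsgn : ∀ i j, G.Adj i j → sgn i j = 1 ∨ sgn i j = -1)
    (hsgnsymm : ∀ i j, sgn i j = sgn j i)
    (hμ : ∀ i, 0 < μ i) (hκ : ∀ i, 0 ≤ κ i)
    (p q : ℝ) (hp : 1 < p) (hpq : p ≤ q) (k : ℕ) :
    (2 : ℝ) ^ (-q) * varEig G w sgn μ κ q k ≤ (2 : ℝ) ^ (-p) * varEig G w sgn μ κ p k ∧
    p * (varEig G w sgn μ κ p k /
        (⨆ i : V, (2 * κ i + ∑ j : V, if G.Adj i j then w i j else 0) / (2 * μ i))) ^ (1 / p)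
      ≤ q * (varEig G w sgn μ κ q k /
        (⨆ i : V, (2 * κ i + ∑ j : V, if G.Adj i j then w i j else 0) / (2 * μ i))) ^ (1 / q) := by
  have hp1 : (1:ℝ) ≤ p := hp.le
  have hp0 : (0:ℝ) < p := by linarith
  have hq0 : (0:ℝ) < q := by linarith
  have hq1 : (1:ℝ) ≤ q := by linarith
  set D : ℝ := ⨆ i : V, (2 * κ i + ∑ j : V, if G.Adj i j then w i j else 0) / (2 * μ i)
    with hDdef
  have hDn : 0 ≤ D := by
    rw [hDdef]
    apply Real.iSup_nonneg
    intro i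
    apply div_nonneg _ (by linarith [hμ i] : (0:ℝ) ≤ 2 * μ i)
    have : 0 ≤ ∑ j : V, if G.Adj i j then w i j else 0 := by
      apply Finset.sum_nonneg; intro j _
      split_ifs with h
      · exact (hw i j h).le
      · exact le_refl 0
    linarith [hκ i]
  have hLp0 := varEig_nonneg G w sgn μ κ hw hκ hμ p k
  have hLq0 := varEig_nonneg G w sgn μ κ hw hκ hμ q k
  by_cases hemp : genusFamily μ p k = ∅
  · -- both families empty, both eigenvalues are 0
    have hempq : genusFamily (V := V) μ q k = ∅ := by
      rw [Set.eq_empty_iff_forall_notMem]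
      intro B hB
      have h := Pw_image_genusFamily hq0 hp0 hB
      rw [hemp] at h
      exact h
    have hp0' : varEig G w sgn μ κ p k = 0 := by
      unfold varEig
      rw [hemp, Set.image_empty, Real.sInf_empty]
    have hq0' : varEig G w sgn μ κ q k = 0 := by
      unfold varEig
      rw [hempq, Set.image_empty, Real.sInf_empty]
    rw [hp0', hq0']
    constructor
    · rw [mul_zero, mul_zero]
    · rw [zero_div, Real.zero_rpow (by positivity : (1:ℝ)/p ≠ 0),
        Real.zero_rpow (by positivity : (1:ℝ)/q ≠ 0), mul_zero, mul_zero]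
  · -- nonempty case
    have hne : (genusFamily (V := V) μ p k).Nonempty := Set.nonempty_iff_ne_empty.mpr hemp
    have hneq : (genusFamily (V := V) μ q k).Nonempty := by
      obtain ⟨B, hB⟩ := hne
      exact ⟨Pw (p/q) '' B, Pw_image_genusFamily hp0 hq0 hB⟩
    have hVSp : ((fun B => sSup (sgRayleigh G w sgn μ κ p '' B)) ''
        genusFamily μ p k).Nonempty := hne.image _
    have hVSq : ((fun B => sSup (sgRayleigh G w sgn μ κ q '' B)) ''
        genusFamily μ q k).Nonempty := hneq.image _
    have hbddq : BddBelow ((fun B => sSup (sgRayleigh G w sgn μ κ q '' B)) ''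
        genusFamily μ q k) :=
      ⟨0, fun x hx => valueSet_nonneg G w sgn μ κ hw hκ hμ q k x hx⟩
    have hbddp : BddBelow ((fun B => sSup (sgRayleigh G w sgn μ κ p '' B)) ''
        genusFamily μ p k) :=
      ⟨0, fun x hx => valueSet_nonneg G w sgn μ κ hw hκ hμ p k x hx⟩
    -- ===== first inequality =====
    have key1 : ∀ x ∈ (fun B => sSup (sgRayleigh G w sgn μ κ p '' B)) '' genusFamily μ p k,
        varEig G w sgn μ κ q k ≤ 2 ^ (q - p) * x := by
      rintro x ⟨B, hB, rfl⟩
      have hB' := Pw_image_genusFamily hp0 hq0 hB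
      have hsSupP0 : 0 ≤ sSup (sgRayleigh G w sgn μ κ p '' B) := by
        apply Real.sSup_nonneg
        rintro y ⟨f, _, rfl⟩
        exact sgRayleigh_nonneg G w sgn μ κ p hw hκ hμ f
      have h1 : varEig G w sgn μ κ q k
          ≤ sSup (sgRayleigh G w sgn μ κ q '' (Pw (p/q) '' B)) := by
        unfold varEig
        exact csInf_le hbddq ⟨Pw (p/q) '' B, hB', rfl⟩
      have h2 : sSup (sgRayleigh G w sgn μ κ q '' (Pw (p/q) '' B))
          ≤ 2 ^ (q - p) * sSup (sgRayleigh G w sgn μ κ p '' B) := by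
        apply Real.sSup_le _ (mul_nonneg (Real.rpow_nonneg (by norm_num) _) hsSupP0)
        rintro y ⟨gg, ⟨f, hfB, rfl⟩, rfl⟩
        have hc := rayleigh_compare_A G w sgn μ κ hw hsgn hκ hp0 hpq (hB.1 hfB)
        have hle : sgRayleigh G w sgn μ κ p f ≤ sSup (sgRayleigh G w sgn μ κ p '' B) :=
          le_csSup (bddAbove_rayleigh G w sgn μ κ hw hwsymm hsgn hμ hκ hp1 hB.1)
            (Set.mem_image_of_mem _ hfB)
        calc sgRayleigh G w sgn μ κ q (Pw (p/q) f)
            ≤ 2 ^ (q - p) * sgRayleigh G w sgn μ κ p f := hc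
          _ ≤ 2 ^ (q - p) * sSup (sgRayleigh G w sgn μ κ p '' B) :=
              mul_le_mul_of_nonneg_left hle (Real.rpow_nonneg (by norm_num) _)
      linarith
    have first : (2 : ℝ) ^ (-q) * varEig G w sgn μ κ q k
        ≤ (2 : ℝ) ^ (-p) * varEig G w sgn μ κ p k := by
      have hstep : (2:ℝ) ^ (p - q) * varEig G w sgn μ κ q k ≤ varEig G w sgn μ κ p k := by
        unfold varEig
        apply le_csInf hVSp
        intro x hx
        have := key1 x hx
        have hmul := mul_le_mul_of_nonneg_left this
          (Real.rpow_nonneg (by norm_num : (0:ℝ) ≤ 2) (p - q))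
        rwa [show (2:ℝ) ^ (p-q) * (2 ^ (q-p) * x) = (2:ℝ) ^ (p-q) * 2 ^ (q-p) * x by ring,
          ← Real.rpow_add (by norm_num : (0:ℝ) < 2), show p - q + (q - p) = 0 by ring,
          Real.rpow_zero, one_mul] at hmul
      have hmul := mul_le_mul_of_nonneg_left hstep
        (Real.rpow_nonneg (by norm_num : (0:ℝ) ≤ 2) (-p))
      rwa [show (2:ℝ) ^ (-p) * ((2:ℝ) ^ (p-q) * varEig G w sgn μ κ q k)
          = (2:ℝ) ^ (-p) * 2 ^ (p-q) * varEig G w sgn μ κ q k by ring,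
        ← Real.rpow_add (by norm_num : (0:ℝ) < 2), show -p + (p - q) = -q by ring] at hmul
    refine ⟨first, ?_⟩
    -- ===== second inequality =====
    rcases eq_or_lt_of_le hpq with hpq' | hpq'
    · subst hpq'
      exact le_refl _
    rcases hDn.eq_or_lt with hD0 | hDpos
    · rw [← hD0, div_zero, div_zero, Real.zero_rpow (by positivity : (1:ℝ)/p ≠ 0),
        Real.zero_rpow (by positivity : (1:ℝ)/q ≠ 0), mul_zero, mul_zero]
    set c : ℝ := (q/p) ^ p * D ^ (1 - p/q) with hcdef
    have hc0 : 0 < c := by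
      rw [hcdef]
      exact mul_pos (Real.rpow_pos_of_pos (by positivity) _) (Real.rpow_pos_of_pos hDpos _)
    have key2 : ∀ x ∈ (fun B => sSup (sgRayleigh G w sgn μ κ q '' B)) '' genusFamily μ q k,
        varEig G w sgn μ κ p k ≤ c * x ^ (p/q) := by
      rintro x ⟨B, hB, rfl⟩
      have hB' := Pw_image_genusFamily hq0 hp0 hB
      have hsSupQ0 : 0 ≤ sSup (sgRayleigh G w sgn μ κ q '' B) := by
        apply Real.sSup_nonneg
        rintro y ⟨f, _, rfl⟩
        exact sgRayleigh_nonneg G w sgn μ κ q hw hκ hμ f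
      have h1 : varEig G w sgn μ κ p k
          ≤ sSup (sgRayleigh G w sgn μ κ p '' (Pw (q/p) '' B)) := by
        unfold varEig
        exact csInf_le hbddp ⟨Pw (q/p) '' B, hB', rfl⟩
      have h2 : sSup (sgRayleigh G w sgn μ κ p '' (Pw (q/p) '' B))
          ≤ c * sSup (sgRayleigh G w sgn μ κ q '' B) ^ (p/q) := by
        apply Real.sSup_le _ (mul_nonneg hc0.le (Real.rpow_nonneg hsSupQ0 _))
        rintro y ⟨gg, ⟨f, hfB, rfl⟩, rfl⟩
        have hcmp := rayleigh_compare_B G w sgn μ κ hw hwsymm hsgn hμ hκ hp1 hpq' (hB.1 hfB)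
        rw [← hDdef] at hcmp
        have hle : sgRayleigh G w sgn μ κ q f ≤ sSup (sgRayleigh G w sgn μ κ q '' B) :=
          le_csSup (bddAbove_rayleigh G w sgn μ κ hw hwsymm hsgn hμ hκ hq1 hB.1)
            (Set.mem_image_of_mem _ hfB)
        have hrn : 0 ≤ sgRayleigh G w sgn μ κ q f :=
          sgRayleigh_nonneg G w sgn μ κ q hw hκ hμ f
        have hpow : sgRayleigh G w sgn μ κ q f ^ (p/q)
            ≤ sSup (sgRayleigh G w sgn μ κ q '' B) ^ (p/q) :=
          Real.rpow_le_rpow hrn hle (by positivity)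
        calc sgRayleigh G w sgn μ κ p (Pw (q/p) f)
            ≤ (q/p) ^ p * sgRayleigh G w sgn μ κ q f ^ (p/q) * D ^ (1 - p/q) := hcmp
          _ ≤ (q/p) ^ p * sSup (sgRayleigh G w sgn μ κ q '' B) ^ (p/q) * D ^ (1 - p/q) := by
              apply mul_le_mul_of_nonneg_right _ (Real.rpow_nonneg hDn _)
              exact mul_le_mul_of_nonneg_left hpow (Real.rpow_nonneg (by positivity) _)
          _ = c * sSup (sgRayleigh G w sgn μ κ q '' B) ^ (p/q) := by
              rw [hcdef]; ring
      linarith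
    have hlam : varEig G w sgn μ κ p k ≤ c * varEig G w sgn μ κ q k ^ (p/q) := by
      have ht : (varEig G w sgn μ κ p k / c) ^ (q/p) ≤ varEig G w sgn μ κ q k := by
        unfold varEig
        apply le_csInf hVSq
        intro x hx
        have hx0 : 0 ≤ x := valueSet_nonneg G w sgn μ κ hw hκ hμ q k x hx
        have h := key2 x hx
        have hdc : varEig G w sgn μ κ p k / c ≤ x ^ (p/q) := by
          rw [div_le_iff₀ hc0]
          linarith [h]
        have := Real.rpow_le_rpow (div_nonneg hLp0 hc0.le) hdc (by positivity : (0:ℝ) ≤ q/p)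
        rwa [← Real.rpow_mul hx0, show p/q * (q/p) = 1 by field_simp, Real.rpow_one] at this
      have h2 := Real.rpow_le_rpow
        (Real.rpow_nonneg (div_nonneg hLp0 hc0.le) _) ht (by positivity : (0:ℝ) ≤ p/q)
      rwa [← Real.rpow_mul (div_nonneg hLp0 hc0.le), show q/p * (p/q) = 1 by field_simp,
        Real.rpow_one, div_le_iff₀ hc0, mul_comm] at h2
    -- final algebra
    have h1 : varEig G w sgn μ κ p k / D ≤ (q/p) ^ p * (varEig G w sgn μ κ q k / D) ^ (p/q) := by
      rw [div_le_iff₀ hDpos]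
      have e : (q/p) ^ p * (varEig G w sgn μ κ q k / D) ^ (p/q) * D
          = c * varEig G w sgn μ κ q k ^ (p/q) := by
        rw [Real.div_rpow hLq0 hDn, hcdef,
          Real.rpow_sub hDpos, Real.rpow_one]
        field_simp
      rw [e]
      exact hlam
    have h2 := Real.rpow_le_rpow (div_nonneg hLp0 hDn) h1 (by positivity : (0:ℝ) ≤ 1/p)
    have e2 : ((q/p) ^ p * (varEig G w sgn μ κ q k / D) ^ (p/q)) ^ ((1:ℝ)/p)
        = (q/p) * (varEig G w sgn μ κ q k / D) ^ ((1:ℝ)/q) := by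
      rw [Real.mul_rpow (Real.rpow_nonneg (by positivity) _)
          (Real.rpow_nonneg (div_nonneg hLq0 hDn) _),
        ← Real.rpow_mul (by positivity : (0:ℝ) ≤ q/p),
        ← Real.rpow_mul (div_nonneg hLq0 hDn),
        show p * (1/p) = 1 by field_simp, Real.rpow_one,
        show p/q * (1/p) = 1/q by field_simp]
    rw [e2] at h2
    calc p * (varEig G w sgn μ κ p k / D) ^ ((1:ℝ)/p)
        ≤ p * ((q/p) * (varEig G w sgn μ κ q k / D) ^ ((1:ℝ)/q)) :=
          mul_le_mul_of_nonneg_left h2 hp0.le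
      _ = q * (varEig G w sgn μ κ q k / D) ^ ((1:ℝ)/q) := by
          field_simp

end GraphAux


/-- **Monotonicity of variational eigenvalues** (Theorem `thm:Monotonicity`).
For a signed graph with nonnegative potential and `1 < p ≤ q`,
`2^{-p} λ_k^{(p)} ≥ 2^{-q} λ_k^{(q)}` and
`p (λ_k^{(p)}/𝒟)^{1/p} ≤ q (λ_k^{(q)}/𝒟)^{1/q}`, where
`𝒟 = max_i (2κ_i + ∑_{j∼i} w_{ij})/(2μ_i)`. -/
theorem monotonicity_of_variational_eigenvalues
    {V : Type} [Fintype V] [DecidableEq V] (n : ℕ) (hn : Fintype.card V = n)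
    (G : SimpleGraph V) (w sgn : V → V → ℝ) (μ κ : V → ℝ)
    (hw : ∀ i j, G.Adj i j → 0 < w i j) (hwsymm : ∀ i j, w i j = w j i)
    (hsgn : ∀ i j, G.Adj i j → sgn i j = 1 ∨ sgn i j = -1)
    (hsgnsymm : ∀ i j, sgn i j = sgn j i)
    (hμ : ∀ i, 0 < μ i) (hκ : ∀ i, 0 ≤ κ i)
    (p q : ℝ) (hp : 1 < p) (hpq : p ≤ q)
    (k : ℕ) (hk1 : 1 ≤ k) (hkn : k ≤ n) :
    (2 : ℝ) ^ (-q) * varEig G w sgn μ κ q k ≤ (2 : ℝ) ^ (-p) * varEig G w sgn μ κ p k ∧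
    p * (varEig G w sgn μ κ p k /
        (⨆ i : V, (2 * κ i + ∑ j : V, if G.Adj i j then w i j else 0) / (2 * μ i))) ^ (1 / p)
      ≤ q * (varEig G w sgn μ κ q k /
        (⨆ i : V, (2 * κ i + ∑ j : V, if G.Adj i j then w i j else 0) / (2 * μ i))) ^ (1 / q) := by
  exact monotonicity_main G w sgn μ κ hw hwsymm hsgn hsgnsymm hμ hκ p q hp hpq k
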